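/- arXiv:2512.06805 — 4 statements merged into one kernel-verified Lean document; each statement's English description precedes it below -/
import Mathlib

section
/- Let u ∈ L²(ℝ) and γ a kernel as in the standing assumptions with nonnegative derivative measure γ'_ε (where γ_ε(x) = ε⁻¹γ(x/ε)), and let w := γ_ε * u. Then ∫_ℝ u(x) ∂_x w(x) dx = -½ ∫_{-∞}^0 ( ∫_ℝ (u(x - s) - u(x))² dx ) γ'_ε(s) ds. In particular, 0 ≤ ∫_{-∞}^0 ρ(s) γ'_ε(s) ds ≤ 2 |∫_ℝ u ∂_x w dx| where ρ(s) := ∫ (u(x-s) - u(x))² dx. -/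
open MeasureTheory Filter Set Topology

/-- Let `u ∈ L²(ℝ)`, `γ` a standing kernel with rescaling `γ_ε(x) = ε⁻¹γ(x/ε)`
whose (nonnegative) derivative measure is `μ` (supported in `(-∞,0]`), and `w = γ_ε * u`.
Via the Volterra identity, the derivative of `w` is `Dw(x) = ∫ u(x-s) dμ(s) - γ_ε(0) u(x)`, and
`∫ u ∂ₓw dx = -½ ∫ ρ(s) dμ(s)` where `ρ(s) = ∫ (u(x-s) - u(x))² dx`; in particular
`0 ≤ ∫ ρ dμ ≤ 2 |∫ u ∂ₓw dx|`. -/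
theorem stmt8 (γ : ℝ → ℝ) (ε : ℝ) (hε : 0 < ε) (u : ℝ → ℝ)
    (hγpos : ∀ z, 0 ≤ γ z)
    (hsupp : Function.support γ ⊆ Iic 0)
    (hint : Integrable γ)
    (hmass : ∫ z in Iic (0:ℝ), γ z = 1)
    (hmono : MonotoneOn γ (Iic 0))
    (hconv : ConvexOn ℝ (Iic 0) γ)
    (hBV : eVariationOn γ univ ≠ ⊤)
    (hu2 : MemLp u 2 (volume : Measure ℝ))
    (γε : ℝ → ℝ) (hγε : ∀ x, γε x = ε⁻¹ * γ (x / ε))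
    (μ : Measure ℝ) [IsFiniteMeasure μ]
    (hμsupp : μ (Ioi 0) = 0)
    (hderiv : ∀ a : ℝ, a ≤ 0 → γε 0 - γε a = (μ (Ioc a 0)).toReal)
    (w Dw : ℝ → ℝ)
    (hw : ∀ x, w x = ∫ y : ℝ, γε (x - y) * u y)
    (hDw : ∀ x, Dw x = (∫ s : ℝ, u (x - s) ∂μ) - γε 0 * u x)
    (hderivw : ∀ x, HasDerivAt w (Dw x) x) :
    (∫ x : ℝ, u x * Dw x
        = -(1/2) * ∫ s : ℝ, (∫ x : ℝ, (u (x - s) - u x)^2) ∂μ) ∧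
    0 ≤ ∫ s : ℝ, (∫ x : ℝ, (u (x - s) - u x)^2) ∂μ ∧
    ∫ s : ℝ, (∫ x : ℝ, (u (x - s) - u x)^2) ∂μ ≤ 2 * |∫ x : ℝ, u x * Dw x| := by
  -- notation
  set I2 : ℝ := ∫ x : ℝ, u x ^ 2 with hI2
  set g : ℝ → ℝ := fun s => ∫ x : ℝ, u x * u (x - s) with hgdef
  -- Step A : γε 0 = (μ univ).toReal
  have hγ_atBot : Tendsto γ atBot (𝓝 0) := by
    rw [tendsto_order]
    constructor
    · intro a ha
      exact Eventually.of_forall fun x => lt_of_lt_of_le ha (hγpos x)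
    · intro a ha
      have hb : ∃ b ≤ (0:ℝ), γ b < a := by
        by_contra hcon
        push_neg at hcon
        have hsub : Iic (0:ℝ) ⊆ {x | a ≤ γ x} := fun x hx => hcon x hx
        have := lt_of_le_of_lt (measure_mono hsub) (hint.measure_ge_lt_top ha)
        rw [Real.volume_Iic] at this
        exact (lt_irrefl _ this).elim
      obtain ⟨b, hb0, hba⟩ := hb
      filter_upwards [eventually_le_atBot b] with x hx
      exact lt_of_le_of_lt (hmono (le_trans hx hb0) hb0 hx) hba
  have hγε_atBot : Tendsto γε atBot (𝓝 0) := by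
    have h1 : Tendsto (fun a : ℝ => a / ε) atBot atBot := by
      simpa [div_eq_mul_inv] using
        ((tendsto_id : Tendsto (id : ℝ → ℝ) atBot atBot).atBot_mul_const (inv_pos.2 hε))
    have h2 : Tendsto (fun a : ℝ => ε⁻¹ * γ (a / ε)) atBot (𝓝 (ε⁻¹ * 0)) :=
      (hγ_atBot.comp h1).const_mul _
    have hfe : γε = fun a => ε⁻¹ * γ (a / ε) := funext hγε
    rw [hfe]
    simpa using h2
  have hseqBot : Tendsto (fun n : ℕ => -(n:ℝ)) atTop atBot := by
    exact tendsto_neg_atBot_iff.2 (tendsto_natCast_atTop_atTop (R := ℝ))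
  have hγεseq : Tendsto (fun n : ℕ => γε (-(n:ℝ))) atTop (𝓝 0) := hγε_atBot.comp hseqBot
  have hiUnion : (⋃ n : ℕ, Ioc (-(n:ℝ)) 0) = Iic 0 := by
    ext x
    simp only [mem_iUnion, mem_Ioc, mem_Iic]
    constructor
    · rintro ⟨n, h1, h2⟩; exact h2
    · intro hx
      obtain ⟨n, hn⟩ := exists_nat_gt (-x)
      exact ⟨n, by linarith, hx⟩
  have hmeasseq : Tendsto (fun n : ℕ => (μ (Ioc (-(n:ℝ)) 0)).toReal) atTop
      (𝓝 ((μ (Iic 0)).toReal)) := by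
    have hmon : Monotone fun n : ℕ => Ioc (-(n:ℝ)) 0 := by
      intro m n hmn
      apply Ioc_subset_Ioc_left
      simp only [neg_le_neg_iff, Nat.cast_le]
      exact hmn
    have := tendsto_measure_iUnion_atTop (μ := μ) hmon
    rw [hiUnion] at this
    exact (ENNReal.tendsto_toReal (measure_ne_top μ _)).comp this
  have hγε0 : γε 0 = (μ (Iic 0)).toReal := by
    have heq : (fun n : ℕ => γε (-(n:ℝ))) =
        fun n : ℕ => γε 0 - (μ (Ioc (-(n:ℝ)) 0)).toReal := by
      funext n
      have h := hderiv (-(n:ℝ)) (by simp : -(n:ℝ) ≤ 0)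
      linarith
    rw [heq] at hγεseq
    have h2 : Tendsto (fun n : ℕ => γε 0 - (μ (Ioc (-(n:ℝ)) 0)).toReal) atTop
        (𝓝 (γε 0 - (μ (Iic 0)).toReal)) := (tendsto_const_nhds).sub hmeasseq
    have := tendsto_nhds_unique hγεseq h2
    linarith
  have hμuniv : μ univ = μ (Iic 0) := by
    apply le_antisymm
    · rw [← Iic_union_Ioi (a := (0:ℝ))]
      calc μ (Iic 0 ∪ Ioi 0) ≤ μ (Iic 0) + μ (Ioi 0) := measure_union_le _ _
        _ = μ (Iic 0) := by rw [hμsupp, add_zero]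
    · exact measure_mono (subset_univ _)
  have hγε0' : γε 0 = (μ univ).toReal := by rw [hγε0, hμuniv]
  -- L² facts
  have husq : Integrable (fun x : ℝ => u x ^ 2) := hu2.integrable_sq
  have hts : ∀ s : ℝ, MemLp (fun x => u (x - s)) 2 (volume : Measure ℝ) := fun s =>
    hu2.comp_measurePreserving (measurePreserving_sub_right volume s)
  have htsq : ∀ s : ℝ, (∫ x : ℝ, u (x - s) ^ 2) = I2 := fun s =>
    integral_sub_right_eq_self (fun x => u x ^ 2) s
  have hmul : ∀ s : ℝ, Integrable (fun x : ℝ => u x * u (x - s)) := by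
    intro s
    have hadd : Integrable (fun x : ℝ => u x ^ 2 + u (x - s) ^ 2) :=
      husq.add (hts s).integrable_sq
    refine Integrable.mono' (hadd.const_mul (1/2))
      (hu2.aestronglyMeasurable.mul (hts s).aestronglyMeasurable) ?_
    refine Eventually.of_forall fun x => ?_
    rw [Real.norm_eq_abs, abs_mul]
    nlinarith [sq_nonneg (|u x| - |u (x - s)|), sq_abs (u x), sq_abs (u (x - s))]
  -- Fubini setup: F on volume.prod μ
  set F : ℝ × ℝ → ℝ := fun p => u p.1 * u (p.1 - p.2) with hFdef
  have hFmeas : AEStronglyMeasurable F ((volume : Measure ℝ).prod μ) := by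
    have h1 : Measure.QuasiMeasurePreserving (Prod.fst : ℝ × ℝ → ℝ)
        ((volume : Measure ℝ).prod μ) volume := by
      refine ⟨measurable_fst, ?_⟩
      rw [Measure.map_fst_prod]
      exact Measure.smul_absolutelyContinuous
    have h2 : Measure.QuasiMeasurePreserving (fun p : ℝ × ℝ => p.1 - p.2)
        ((volume : Measure ℝ).prod μ) volume :=
      quasiMeasurePreserving_sub_of_right_invariant volume μ
    exact (hu2.aestronglyMeasurable.comp_quasiMeasurePreserving h1).mul
      (hu2.aestronglyMeasurable.comp_quasiMeasurePreserving h2)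
  have hFint : Integrable F ((volume : Measure ℝ).prod μ) := by
    rw [integrable_prod_iff' hFmeas]
    constructor
    · exact Eventually.of_forall fun s => hmul s
    · refine Integrable.mono' (integrable_const I2)
        hFmeas.norm.prod_swap.integral_prod_right' (Eventually.of_forall fun s => ?_)
      have hb : (∫ x : ℝ, ‖u x * u (x - s)‖) ≤ I2 := by
        have : (∫ x : ℝ, ‖u x * u (x - s)‖) ≤
            ∫ x : ℝ, (1/2) * (u x ^ 2 + u (x - s) ^ 2) := by
          have hadd : Integrable (fun x : ℝ => u x ^ 2 + u (x - s) ^ 2) :=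
            husq.add (hts s).integrable_sq
          refine integral_mono (hmul s).norm (hadd.const_mul _) ?_
          intro x
          simp only [Real.norm_eq_abs, abs_mul]
          nlinarith [sq_nonneg (|u x| - |u (x - s)|), sq_abs (u x), sq_abs (u (x - s))]
        rw [integral_const_mul, integral_add husq (hts s).integrable_sq, htsq s] at this
        linarith
      rw [Real.norm_eq_abs, abs_of_nonneg (integral_nonneg fun x => norm_nonneg _)]
      exact hb
  have hgint : Integrable g μ := hFint.integral_prod_right
  -- pointwise identity for ρ
  have hρ : ∀ s : ℝ, (∫ x : ℝ, (u (x - s) - u x)^2) = 2 * I2 - 2 * g s := by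
    intro s
    have hpt : (fun x : ℝ => (u (x - s) - u x)^2) =
        fun x => (u (x - s) ^ 2 + u x ^ 2) - 2 * (u x * u (x - s)) := by
      funext x; ring
    have hadd : Integrable (fun x : ℝ => u (x - s) ^ 2 + u x ^ 2) :=
      (hts s).integrable_sq.add husq
    have hc2 : Integrable (fun x : ℝ => 2 * (u x * u (x - s))) := (hmul s).const_mul 2
    rw [hpt, integral_sub hadd hc2,
      integral_add (hts s).integrable_sq husq, integral_const_mul, htsq s]
    ring
  -- the LHS computation
  have hswap : (∫ x : ℝ, ∫ s : ℝ, u x * u (x - s) ∂μ) = ∫ s : ℝ, g s ∂μ := by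
    exact integral_integral_swap (f := fun x s => u x * u (x - s)) hFint
  have hDwint : ∀ x, u x * Dw x = (∫ s : ℝ, u x * u (x - s) ∂μ) - γε 0 * u x ^ 2 := by
    intro x
    rw [hDw x, integral_const_mul]
    ring
  have hint1 : Integrable (fun x : ℝ => ∫ s : ℝ, u x * u (x - s) ∂μ) volume :=
    hFint.integral_prod_left
  have hLHS : (∫ x : ℝ, u x * Dw x) = (∫ s : ℝ, g s ∂μ) - γε 0 * I2 := by
    calc (∫ x : ℝ, u x * Dw x)
        = ∫ x : ℝ, ((∫ s : ℝ, u x * u (x - s) ∂μ) - γε 0 * u x ^ 2) := by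
          exact integral_congr_ae (Eventually.of_forall fun x => hDwint x)
      _ = (∫ x : ℝ, ∫ s : ℝ, u x * u (x - s) ∂μ) - ∫ x : ℝ, γε 0 * u x ^ 2 :=
          integral_sub hint1 (husq.const_mul _)
      _ = (∫ s : ℝ, g s ∂μ) - γε 0 * I2 := by rw [hswap, integral_const_mul]
  -- RHS computation
  have hRHS : (∫ s : ℝ, (∫ x : ℝ, (u (x - s) - u x)^2) ∂μ)
      = 2 * ((μ univ).toReal * I2) - 2 * ∫ s : ℝ, g s ∂μ := by
    calc (∫ s : ℝ, (∫ x : ℝ, (u (x - s) - u x)^2) ∂μ)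
        = ∫ s : ℝ, (2 * I2 - 2 * g s) ∂μ := by
          exact integral_congr_ae (Eventually.of_forall fun s => hρ s)
      _ = (∫ _ : ℝ, (2 * I2) ∂μ) - ∫ s : ℝ, 2 * g s ∂μ :=
          integral_sub (integrable_const _) (hgint.const_mul 2)
      _ = 2 * ((μ univ).toReal * I2) - 2 * ∫ s : ℝ, g s ∂μ := by
          rw [integral_const, integral_const_mul]
          simp [smul_eq_mul, Measure.real]
          ring
  have hmain : (∫ x : ℝ, u x * Dw x)
      = -(1/2) * ∫ s : ℝ, (∫ x : ℝ, (u (x - s) - u x)^2) ∂μ := by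
    rw [hLHS, hRHS, hγε0']
    ring
  have hnonneg : 0 ≤ ∫ s : ℝ, (∫ x : ℝ, (u (x - s) - u x)^2) ∂μ :=
    integral_nonneg fun s => integral_nonneg fun x => sq_nonneg _
  refine ⟨hmain, hnonneg, ?_⟩
  rw [hmain, abs_of_nonpos (by nlinarith)]
  ring_nf
  nlinarith
end

section
/- Let γ satisfy the standing kernel assumptions, ε > 0, γ_ε(x) = ε⁻¹γ(x/ε), and let u ∈ L²(ℝ) satisfy, for some constant B ≥ 0, the bound ∫_{-∞}^0 ρ(s) γ'_ε(s) ds ≤ 2B, where ρ(s) = ∫_ℝ (u(x-s) - u(x))² dx. Let δ_γ, η_γ > 0 be such that h(z) := ∫_{-∞}^0 2(1-cos(zs)) γ'(s) ds ≥ η_γ δ² for all |z| ≥ δ, 0 < δ < δ_γ. Then for every δ ∈ (0, δ_γ), ∫_{|εξ| ≥ δ} |û(ξ)|² dξ ≤ (2ε/(η_γ δ²)) B. -/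
open MeasureTheory Filter Set Topology Real Complex

lemma kernel_norm (ξ x : ℝ) : ‖Complex.exp (-(Complex.I * ξ * x))‖ = 1 := by
  rw [Complex.norm_exp]; simp

lemma kernel_norm' (ξ x : ℝ) : ‖Complex.exp (Complex.I * ξ * x)‖ = 1 := by
  rw [Complex.norm_exp]; simp

lemma gauss_eq (v : ℝ → ℝ) (hm : StronglyMeasurable v) (h1 : Integrable v)
    (t : ℝ) (ht : 0 < t) :
    ∫ ξ : ℝ, rexp (-t * ξ^2) * ‖∫ x : ℝ, Complex.exp (-(Complex.I * ξ * x)) * v x‖^2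
      = Real.sqrt (π/t) *
        ∫ p : ℝ × ℝ, rexp (-(p.2-p.1)^2/(4*t)) * (v p.1 * v p.2) := by
  set V : ℝ → ℂ := fun ξ => ∫ x : ℝ, Complex.exp (-(Complex.I * ξ * x)) * v x with hV
  have h1' : Integrable (fun x : ℝ => (v x : ℂ)) := h1.ofReal
  have hA : ∀ ξ : ℝ, Integrable (fun x : ℝ => Complex.exp (-(Complex.I * ξ * x)) * v x) := by
    intro ξ
    refine Integrable.bdd_mul (c := 1) h1'
      ((Complex.continuous_exp.comp (by continuity)).aestronglyMeasurable) ?_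
    filter_upwards with x; rw [kernel_norm]
  have hB : ∀ ξ : ℝ, Integrable (fun x : ℝ => Complex.exp (Complex.I * ξ * x) * v x) := by
    intro ξ
    refine Integrable.bdd_mul (c := 1) h1'
      ((Complex.continuous_exp.comp (by continuity)).aestronglyMeasurable) ?_
    filter_upwards with x; rw [kernel_norm']
  have hconj : ∀ ξ : ℝ, (starRingEnd ℂ) (V ξ) = ∫ y : ℝ, Complex.exp (Complex.I * ξ * y) * v y := by
    intro ξ
    rw [hV, ← integral_conj]
    congr 1; funext x
    simp [← Complex.exp_conj, map_mul, Complex.conj_ofReal]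
  -- product as double integral
  have hprod : ∀ ξ : ℝ, V ξ * (starRingEnd ℂ) (V ξ) =
      ∫ p : ℝ × ℝ, (Complex.exp (-(Complex.I * ξ * p.1)) * v p.1) *
        (Complex.exp (Complex.I * ξ * p.2) * v p.2) ∂(volume.prod volume) := by
    intro ξ
    rw [hconj, integral_prod _ ((hA ξ).mul_prod (hB ξ)), hV]
    simp only
    rw [← integral_mul_const]
    congr 1; funext x
    rw [← integral_const_mul]
  -- the uncurried integrand
  set Φ : ℝ → ℝ × ℝ → ℂ := fun ξ p =>
    (Complex.exp (Complex.I * (p.2 - p.1) * ξ) * Complex.exp (-(t:ℂ) * ξ^2)) *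
      ((v p.1 : ℂ) * (v p.2 : ℂ)) with hΦ
  have hΦnorm : ∀ ξ p, ‖Φ ξ p‖ = rexp (-t * ξ^2) * (|v p.1| * |v p.2|) := by
    intro ξ p
    simp only [hΦ, norm_mul, Complex.norm_exp, Complex.norm_real, Real.norm_eq_abs]
    have h2 : (Complex.I * ((p.2:ℂ) - p.1) * ξ).re = 0 := by
      simp [Complex.mul_re, Complex.mul_im]
    have h3 : ((-(t:ℂ)) * (ξ:ℂ)^2).re = -t * ξ^2 := by
      norm_cast
    rw [h2, h3, Real.exp_zero, one_mul]
  have hΦint : Integrable (Function.uncurry Φ) (volume.prod (volume.prod volume)) := by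
    have hbound : Integrable (fun q : ℝ × (ℝ × ℝ) =>
        rexp (-t * q.1^2) * (|v q.2.1| * |v q.2.2|)) (volume.prod (volume.prod volume)) :=
      (integrable_exp_neg_mul_sq ht).mul_prod (h1.abs.mul_prod h1.abs)
    have huncurry : Function.uncurry Φ = fun q : ℝ × (ℝ × ℝ) =>
        (Complex.exp (Complex.I * ((q.2.2:ℂ) - q.2.1) * q.1) * Complex.exp (-(t:ℂ) * (q.1:ℂ)^2)) *
          ((v q.2.1 : ℂ) * (v q.2.2 : ℂ)) := rfl
    have hmeas : AEStronglyMeasurable (Function.uncurry Φ) (volume.prod (volume.prod volume)) := by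
      rw [huncurry]
      have hc : Continuous (fun q : ℝ × (ℝ × ℝ) =>
          Complex.exp (Complex.I * ((q.2.2:ℂ) - q.2.1) * q.1) *
            Complex.exp (-(t:ℂ) * (q.1:ℂ)^2)) := by fun_prop
      have hsm1 : StronglyMeasurable (fun q : ℝ × (ℝ × ℝ) => (v q.2.1 : ℂ)) :=
        Complex.continuous_ofReal.comp_stronglyMeasurable
          (hm.comp_measurable (measurable_snd.fst))
      have hsm2 : StronglyMeasurable (fun q : ℝ × (ℝ × ℝ) => (v q.2.2 : ℂ)) :=
        Complex.continuous_ofReal.comp_stronglyMeasurable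
          (hm.comp_measurable (measurable_snd.snd))
      exact hc.aestronglyMeasurable.mul (hsm1.mul hsm2).aestronglyMeasurable
    refine hbound.mono' hmeas ?_
    filter_upwards with q
    rw [Function.uncurry]
    rw [hΦnorm]
  -- pointwise: cexp(-tξ²)*(V*conjV) = ∫p Φ ξ p
  have hpt : ∀ ξ : ℝ, Complex.exp (-(t:ℂ) * ξ^2) * (V ξ * (starRingEnd ℂ) (V ξ)) =
      ∫ p : ℝ × ℝ, Φ ξ p ∂(volume.prod volume) := by
    intro ξ
    rw [hprod, ← integral_const_mul]
    congr 1; funext p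
    rw [hΦ]
    simp only
    rw [show Complex.I * ((p.2:ℂ) - p.1) * ξ = -(Complex.I * ξ * p.1) + Complex.I * ξ * p.2 by ring,
      Complex.exp_add]
    ring
  -- gaussian evaluation
  have hgauss : ∀ p : ℝ × ℝ, (∫ ξ : ℝ, Φ ξ p) =
      ((Real.sqrt (π/t) * rexp (-(p.2-p.1)^2/(4*t)) * (v p.1 * v p.2) : ℝ) : ℂ) := by
    intro p
    rw [hΦ]
    simp only
    rw [integral_mul_const]
    have hb : (0:ℝ) < ((t:ℂ)).re := by simpa using ht
    rw [fourierIntegral_gaussian hb ((p.2:ℂ) - p.1)]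
    have hsq : ((π:ℂ)/t) ^ (1/2 : ℂ) = ((Real.sqrt (π/t) : ℝ) : ℂ) := by
      have hc : ((π/t : ℝ):ℂ) = (π:ℂ)/t := by push_cast; ring
      rw [Real.sqrt_eq_rpow, Complex.ofReal_cpow (div_pos pi_pos ht).le, hc]
      norm_num
    have harg : -((p.2:ℂ) - p.1)^2 / (4 * (t:ℂ)) = ((-(p.2-p.1)^2/(4*t) : ℝ) : ℂ) := by
      push_cast; ring
    rw [hsq, harg, ← Complex.ofReal_exp]
    push_cast
    ring
  -- now the main chain, via ofReal injectivity
  apply Complex.ofReal_injective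
  calc ((∫ ξ : ℝ, rexp (-t * ξ^2) * ‖V ξ‖^2 : ℝ) : ℂ)
      = ∫ ξ : ℝ, ((rexp (-t * ξ^2) * ‖V ξ‖^2 : ℝ) : ℂ) := (integral_ofReal).symm
    _ = ∫ ξ : ℝ, Complex.exp (-(t:ℂ) * ξ^2) * (V ξ * (starRingEnd ℂ) (V ξ)) := by
        congr 1; funext ξ
        rw [Complex.mul_conj, Complex.normSq_eq_norm_sq]
        push_cast [Complex.ofReal_exp]
        ring
    _ = ∫ ξ : ℝ, ∫ p : ℝ × ℝ, Φ ξ p ∂(volume.prod volume) := by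
        congr 1; funext ξ; exact hpt ξ
    _ = ∫ p : ℝ × ℝ, ∫ ξ : ℝ, Φ ξ p ∂volume ∂(volume.prod volume) :=
        integral_integral_swap hΦint
    _ = ∫ p : ℝ × ℝ, ((Real.sqrt (π/t) * rexp (-(p.2-p.1)^2/(4*t)) * (v p.1 * v p.2) : ℝ) : ℂ)
          ∂(volume.prod volume) := by
        congr 1; funext p; exact hgauss p
    _ = ((∫ p : ℝ × ℝ, Real.sqrt (π/t) * rexp (-(p.2-p.1)^2/(4*t)) * (v p.1 * v p.2)
          ∂(volume.prod volume) : ℝ) : ℂ) := integral_ofReal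
    _ = ((Real.sqrt (π/t) * ∫ p : ℝ × ℝ, rexp (-(p.2-p.1)^2/(4*t)) * (v p.1 * v p.2)
          ∂(volume.prod volume) : ℝ) : ℂ) := by
        norm_cast
        rw [← integral_const_mul]
        congr 1; funext p; ring

example (u : ℝ → ℝ) (h2 : MemLp u 2 (volume : Measure ℝ)) (c : ℝ) :
    MemLp (fun x => u (x - c)) 2 (volume : Measure ℝ) :=
  h2.comp_measurePreserving (measurePreserving_sub_right volume c)

example (f : ℝ → ℝ) (c : ℝ) : ∫ x : ℝ, f (x - c) = ∫ x : ℝ, f x :=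
  integral_sub_right_eq_self f c

lemma gauss_int_bound (v : ℝ → ℝ) (hm : StronglyMeasurable v) (h2 : MemLp v 2 (volume : Measure ℝ))
    (t : ℝ) (ht : 0 < t) :
    ∫ p : ℝ × ℝ, rexp (-(p.2-p.1)^2/(4*t)) * (v p.1 * v p.2) ∂(volume.prod volume)
      ≤ Real.sqrt (π / (4*t)⁻¹) * ∫ x : ℝ, (v x)^2 := by
  set C := Real.sqrt (π / (4*t)⁻¹) with hC
  have hvsq : Integrable (fun x : ℝ => v x ^ 2) := h2.integrable_sq
  have hgi : Integrable (fun w : ℝ => rexp (-(w^2)/(4*t))) := by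
    have := integrable_exp_neg_mul_sq (b := (4*t)⁻¹) (by positivity)
    refine this.congr ?_
    filter_upwards with w
    congr 1; ring
  have hgval : ∫ w : ℝ, rexp (-(w^2)/(4*t)) = C := by
    rw [hC, ← integral_gaussian ((4*t)⁻¹)]
    congr 1; funext w; congr 1; ring
  have hgpos : ∀ w : ℝ, 0 ≤ rexp (-(w^2)/(4*t)) := fun w => (Real.exp_pos _).le
  -- I1 : with v p.1 ^ 2
  have hf1meas : AEStronglyMeasurable (fun p : ℝ × ℝ => rexp (-(p.2-p.1)^2/(4*t)) * v p.1 ^ 2)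
      (volume.prod volume) := by
    refine AEStronglyMeasurable.mul ?_ ?_
    · exact (Continuous.aestronglyMeasurable (by fun_prop))
    · exact ((hm.measurable.comp measurable_fst).pow_const 2).aestronglyMeasurable
  have I1 : Integrable (fun p : ℝ × ℝ => rexp (-(p.2-p.1)^2/(4*t)) * v p.1 ^ 2)
      (volume.prod volume) := by
    rw [integrable_prod_iff hf1meas]
    constructor
    · filter_upwards with x
      exact ((hgi.comp_sub_right x).mul_const (v x ^ 2)).congr
        (by filter_upwards with y; ring_nf)
    · refine Integrable.congr (hvsq.const_mul C) ?_
      filter_upwards with x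
      have h1 : ∫ y : ℝ, ‖rexp (-((x,y).2-(x,y).1)^2/(4*t)) * v (x,y).1 ^ 2‖
          = (∫ y : ℝ, rexp (-(y-x)^2/(4*t))) * v x ^ 2 := by
        rw [← integral_mul_const]
        congr 1; funext y
        simp only
        rw [norm_mul, Real.norm_eq_abs, Real.norm_eq_abs, _root_.abs_of_nonneg (hgpos _),
          _root_.abs_of_nonneg (sq_nonneg _)]
      rw [h1, integral_sub_right_eq_self (fun w => rexp (-(w^2)/(4*t))) x, hgval]
  have hI1val : ∫ p : ℝ × ℝ, rexp (-(p.2-p.1)^2/(4*t)) * v p.1 ^ 2 ∂(volume.prod volume)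
      = C * ∫ x : ℝ, v x ^ 2 := by
    rw [integral_prod _ I1, ← integral_const_mul]
    congr 1; funext x
    simp only
    rw [integral_mul_const, integral_sub_right_eq_self (fun w => rexp (-(w^2)/(4*t))) x, hgval]
  -- I2 via swap
  have hswapeq : ∀ p : ℝ × ℝ,
      (fun q : ℝ × ℝ => rexp (-(q.2-q.1)^2/(4*t)) * v q.1 ^ 2) p.swap
      = rexp (-(p.2-p.1)^2/(4*t)) * v p.2 ^ 2 := by
    intro p
    simp only [Prod.fst_swap, Prod.snd_swap]
    rw [show ((p.1:ℝ) - p.2)^2 = (p.2 - p.1)^2 by ring]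
  have I2 : Integrable (fun p : ℝ × ℝ => rexp (-(p.2-p.1)^2/(4*t)) * v p.2 ^ 2)
      (volume.prod volume) := by
    refine (I1.swap).congr ?_
    filter_upwards with p
    exact hswapeq p
  have hI2val : ∫ p : ℝ × ℝ, rexp (-(p.2-p.1)^2/(4*t)) * v p.2 ^ 2 ∂(volume.prod volume)
      = C * ∫ x : ℝ, v x ^ 2 := by
    rw [← hI1val, ← integral_prod_swap (fun q : ℝ × ℝ => rexp (-(q.2-q.1)^2/(4*t)) * v q.1 ^ 2)]
    congr 1; funext p; exact (hswapeq p).symm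
  -- main integrand
  have hf0meas : AEStronglyMeasurable (fun p : ℝ × ℝ => rexp (-(p.2-p.1)^2/(4*t)) * (v p.1 * v p.2))
      (volume.prod volume) := by
    refine AEStronglyMeasurable.mul (Continuous.aestronglyMeasurable (by fun_prop)) ?_
    exact ((hm.comp_measurable measurable_fst).mul
      (hm.comp_measurable measurable_snd)).aestronglyMeasurable
  have hbint : Integrable (fun p : ℝ × ℝ =>
      (1/2) * (rexp (-(p.2-p.1)^2/(4*t)) * v p.1 ^ 2 + rexp (-(p.2-p.1)^2/(4*t)) * v p.2 ^ 2))
      (volume.prod volume) := (I1.add I2).const_mul _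
  have hptle : ∀ p : ℝ × ℝ, rexp (-(p.2-p.1)^2/(4*t)) * (v p.1 * v p.2)
      ≤ (1/2) * (rexp (-(p.2-p.1)^2/(4*t)) * v p.1 ^ 2 + rexp (-(p.2-p.1)^2/(4*t)) * v p.2 ^ 2) := by
    intro p
    have h := hgpos (p.2 - p.1)
    nlinarith [sq_nonneg (v p.1 - v p.2), mul_nonneg h (sq_nonneg (v p.1 - v p.2))]
  have I0 : Integrable (fun p : ℝ × ℝ => rexp (-(p.2-p.1)^2/(4*t)) * (v p.1 * v p.2))
      (volume.prod volume) := by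
    refine hbint.mono' hf0meas ?_
    filter_upwards with p
    rw [Real.norm_eq_abs, abs_mul, _root_.abs_of_nonneg (hgpos _), abs_mul]
    have h := hgpos (p.2 - p.1)
    have hb : (0:ℝ) ≤ 1/2 * (rexp (-(p.2-p.1)^2/(4*t)) * v p.1 ^ 2
        + rexp (-(p.2-p.1)^2/(4*t)) * v p.2 ^ 2) := by positivity
    nlinarith [mul_nonneg h (sq_nonneg (|v p.1| - |v p.2|)), _root_.sq_abs (v p.1), _root_.sq_abs (v p.2)]
  calc ∫ p : ℝ × ℝ, rexp (-(p.2-p.1)^2/(4*t)) * (v p.1 * v p.2) ∂(volume.prod volume)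
      ≤ ∫ p : ℝ × ℝ, (1/2) * (rexp (-(p.2-p.1)^2/(4*t)) * v p.1 ^ 2
          + rexp (-(p.2-p.1)^2/(4*t)) * v p.2 ^ 2) ∂(volume.prod volume) :=
        integral_mono I0 hbint hptle
    _ = C * ∫ x : ℝ, v x ^ 2 := by
        rw [integral_const_mul, integral_add I1 I2, hI1val, hI2val]
        ring

lemma cont_V (v : ℝ → ℝ) (h1 : Integrable v) :
    Continuous (fun ξ : ℝ => ∫ x : ℝ, Complex.exp (-(Complex.I * ξ * x)) * v x) := by
  apply continuous_of_dominated (bound := fun x => |v x|)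
  · intro ξ
    exact ((Complex.continuous_exp.comp (by continuity)).aestronglyMeasurable).mul
      (Complex.continuous_ofReal.comp_aestronglyMeasurable h1.aestronglyMeasurable)
  · intro ξ
    filter_upwards with x
    rw [norm_mul, Complex.norm_exp]
    simp [Real.norm_eq_abs]
  · exact h1.abs
  · filter_upwards with x
    exact (Complex.continuous_exp.comp (by continuity)).mul continuous_const

lemma planch_le (v : ℝ → ℝ) (hm : StronglyMeasurable v) (h1 : Integrable v)
    (h2 : MemLp v 2 (volume : Measure ℝ)) :
    ∫⁻ ξ : ℝ, ENNReal.ofReal (‖∫ x : ℝ, Complex.exp (-(Complex.I * ξ * x)) * v x‖^2)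
      ≤ ENNReal.ofReal (2 * π * ∫ x : ℝ, (v x)^2) := by
  set V : ℝ → ℂ := fun ξ => ∫ x : ℝ, Complex.exp (-(Complex.I * ξ * x)) * v x with hV
  have hVcont : Continuous V := cont_V v h1
  set Mv : ℝ := ∫ x : ℝ, |v x| with hMv
  have hVb : ∀ ξ : ℝ, ‖V ξ‖ ≤ Mv := by
    intro ξ
    refine (norm_integral_le_integral_norm _).trans_eq ?_
    congr 1; funext x
    rw [norm_mul, Complex.norm_exp]
    simp [Real.norm_eq_abs]
  have hsqint : ∀ t : ℝ, 0 < t → Integrable (fun ξ : ℝ => rexp (-t * ξ^2) * ‖V ξ‖^2) := by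
    intro t ht
    refine Integrable.mono' ((integrable_exp_neg_mul_sq ht).mul_const (Mv^2)) ?_ ?_
    · exact ((Real.continuous_exp.comp (by continuity)).mul
        ((hVcont.norm).pow 2)).aestronglyMeasurable
    · filter_upwards with ξ
      rw [Real.norm_eq_abs, _root_.abs_of_nonneg (by positivity)]
      exact mul_le_mul_of_nonneg_left
        (pow_le_pow_left₀ (norm_nonneg _) (hVb ξ) 2) (Real.exp_pos _).le
  have hconst : ∀ t : ℝ, 0 < t → Real.sqrt (π/t) * Real.sqrt (π / (4*t)⁻¹) = 2*π := by
    intro t ht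
    rw [← Real.sqrt_mul (by positivity)]
    rw [show (π/t) * (π/(4*t)⁻¹) = (2*π)^2 by field_simp; ring]
    exact Real.sqrt_sq (by positivity)
  have key : ∀ t : ℝ, 0 < t →
      ∫⁻ ξ : ℝ, ENNReal.ofReal (rexp (-t * ξ^2) * ‖V ξ‖^2)
        ≤ ENNReal.ofReal (2 * π * ∫ x : ℝ, (v x)^2) := by
    intro t ht
    rw [← ofReal_integral_eq_lintegral_ofReal (hsqint t ht)
      (by filter_upwards with ξ; positivity)]
    apply ENNReal.ofReal_le_ofReal
    calc ∫ ξ : ℝ, rexp (-t * ξ^2) * ‖V ξ‖^2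
        = Real.sqrt (π/t) * ∫ p : ℝ × ℝ, rexp (-(p.2-p.1)^2/(4*t)) * (v p.1 * v p.2)
            ∂(volume.prod volume) := gauss_eq v hm h1 t ht
      _ ≤ Real.sqrt (π/t) * (Real.sqrt (π / (4*t)⁻¹) * ∫ x : ℝ, (v x)^2) :=
          mul_le_mul_of_nonneg_left (gauss_int_bound v hm h2 t ht) (Real.sqrt_nonneg _)
      _ = 2 * π * ∫ x : ℝ, (v x)^2 := by rw [← mul_assoc, hconst t ht]
  -- Fatou
  have hmeasn : ∀ n : ℕ, Measurable fun ξ : ℝ =>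
      ENNReal.ofReal (rexp (-(1/(n+1:ℝ)) * ξ^2) * ‖V ξ‖^2) := by
    intro n
    exact (((Real.continuous_exp.comp (by continuity)).mul
      ((hVcont.norm).pow 2)).measurable).ennreal_ofReal
  have htend : ∀ ξ : ℝ, Tendsto (fun n : ℕ =>
      ENNReal.ofReal (rexp (-(1/(n+1:ℝ)) * ξ^2) * ‖V ξ‖^2)) atTop
      (𝓝 (ENNReal.ofReal (‖V ξ‖^2))) := by
    intro ξ
    apply ENNReal.tendsto_ofReal
    have h0 : Tendsto (fun n : ℕ => (1:ℝ)/(n+1)) atTop (𝓝 0) :=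
      tendsto_one_div_add_atTop_nhds_zero_nat
    have h1' : Tendsto (fun n : ℕ => -(1/(n+1:ℝ)) * ξ^2) atTop (𝓝 0) := by
      have := (h0.neg).mul_const (ξ^2)
      simpa using this
    have h2' : Tendsto (fun n : ℕ => rexp (-(1/(n+1:ℝ)) * ξ^2)) atTop (𝓝 1) := by
      have := (Real.continuous_exp.tendsto 0).comp h1'
      simpa [Function.comp_def] using this
    have := h2'.mul_const (‖V ξ‖^2)
    simpa using this
  calc ∫⁻ ξ : ℝ, ENNReal.ofReal (‖V ξ‖^2)
      = ∫⁻ ξ : ℝ, liminf (fun n : ℕ =>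
          ENNReal.ofReal (rexp (-(1/(n+1:ℝ)) * ξ^2) * ‖V ξ‖^2)) atTop := by
        congr 1; funext ξ
        exact ((htend ξ).liminf_eq).symm
    _ ≤ liminf (fun n : ℕ => ∫⁻ ξ : ℝ,
          ENNReal.ofReal (rexp (-(1/(n+1:ℝ)) * ξ^2) * ‖V ξ‖^2)) atTop :=
        lintegral_liminf_le hmeasn
    _ ≤ ENNReal.ofReal (2 * π * ∫ x : ℝ, (v x)^2) := by
        refine Filter.liminf_le_of_frequently_le ?_ (by isBoundedDefault)
        exact Filter.Frequently.of_forall fun n => key (1/(n+1:ℝ)) (by positivity)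

lemma trans_V (u : ℝ → ℝ) (h1 : Integrable u) (ξ c : ℝ) :
    ∫ x : ℝ, Complex.exp (-(Complex.I * ξ * x)) * (u (x - c) : ℂ)
      = Complex.exp (-(Complex.I * ξ * c)) * ∫ x : ℝ, Complex.exp (-(Complex.I * ξ * x)) * u x := by
  calc ∫ x : ℝ, Complex.exp (-(Complex.I * ξ * x)) * (u (x - c) : ℂ)
      = ∫ x : ℝ, Complex.exp (-(Complex.I * ξ * ((x + c : ℝ) : ℂ))) * (u ((x + c) - c) : ℂ) :=
        (integral_add_right_eq_self
          (fun x : ℝ => Complex.exp (-(Complex.I * ξ * x)) * (u (x - c) : ℂ)) c).symm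
    _ = Complex.exp (-(Complex.I * ξ * c)) * ∫ x : ℝ, Complex.exp (-(Complex.I * ξ * x)) * u x := by
        rw [← integral_const_mul]
        congr 1; funext x
        rw [add_sub_cancel_right, ← mul_assoc, ← Complex.exp_add]
        congr 2
        push_cast
        ring

lemma norm_emi (θ : ℝ) : ‖Complex.exp (-(Complex.I * θ)) - 1‖^2 = 2 - 2 * Real.cos θ := by
  have he : Complex.exp (-(Complex.I * θ)) = ((Real.cos θ : ℝ) : ℂ) - ((Real.sin θ : ℝ) : ℂ) * Complex.I := by
    rw [show -(Complex.I * θ) = ((-θ : ℝ) : ℂ) * Complex.I by push_cast; ring, Complex.exp_mul_I]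
    rw [← Complex.ofReal_cos, ← Complex.ofReal_sin, Real.cos_neg, Real.sin_neg]
    push_cast
    ring
  rw [he, Complex.sq_norm, Complex.normSq_apply]
  simp only [Complex.sub_re, Complex.sub_im, Complex.ofReal_re, Complex.ofReal_im,
    Complex.mul_re, Complex.mul_im, Complex.I_re, Complex.I_im, Complex.one_re, Complex.one_im]
  nlinarith [Real.sin_sq_add_cos_sq θ]

lemma step_mul (ν : Measure ℝ) (g : ℝ → ℝ) (hg : Integrable g ν) (hgnn : ∀ s, 0 ≤ g s)
    (c : ℝ) : ENNReal.ofReal (∫ s, g s ∂ν) * ENNReal.ofReal c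
      = ∫⁻ s, ENNReal.ofReal (g s * c) ∂ν := by
  rw [ofReal_integral_eq_lintegral_ofReal hg (ae_of_all _ hgnn),
    ← lintegral_mul_const' (ENNReal.ofReal c) _ ENNReal.ofReal_ne_top]
  congr 1; funext s; rw [← ENNReal.ofReal_mul (hgnn s)]

set_option maxHeartbeats 2000000 in
lemma key_main (ε B ηγ : ℝ) (hε : 0 < ε) (hB : 0 ≤ B) (hηγ : 0 < ηγ)
    (μ : Measure ℝ) [IsFiniteMeasure μ] (u : ℝ → ℝ) (hm : StronglyMeasurable u)
    (hu2 : MemLp u 2 (volume : Measure ℝ)) (hu1 : Integrable u)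
    (hρbound : ε⁻¹ * ∫ s : ℝ, (∫ x : ℝ, (u (x - ε * s) - u x)^2) ∂μ ≤ 2 * B)
    (δ : ℝ) (hδ0 : 0 < δ)
    (hlowδ : ∀ z : ℝ, δ ≤ |z| → ηγ * δ^2 ≤ ∫ s : ℝ, 2 * (1 - Real.cos (z * s)) ∂μ) :
    ∫ ξ in {ξ : ℝ | δ ≤ |ε * ξ|},
        ‖(Real.sqrt (2 * π))⁻¹ •
          ∫ x : ℝ, Complex.exp (-(Complex.I * (ξ:ℂ) * (x:ℂ))) * (u x : ℂ)‖^2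
      ≤ (2 * ε / (ηγ * δ^2)) * B := by
  have h2π : (0:ℝ) < 2 * π := by positivity
  set V : ℝ → ℂ := fun ξ => ∫ x : ℝ, Complex.exp (-(Complex.I * ξ * x)) * u x with hVdef
  have hVcont : Continuous V := cont_V u hu1
  have hFeq : ∀ z : ℂ, ‖(Real.sqrt (2*π))⁻¹ • z‖^2 = (2*π)⁻¹ * ‖z‖^2 := by
    intro z
    rw [norm_smul, mul_pow, Real.norm_eq_abs,
      _root_.abs_of_nonneg (inv_nonneg.mpr (Real.sqrt_nonneg _)), inv_pow,
      Real.sq_sqrt h2π.le]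
  have hFcont : Continuous (fun ξ : ℝ => ‖(Real.sqrt (2*π))⁻¹ • V ξ‖^2) :=
    ((continuous_pow 2).comp (hVcont.const_smul ((Real.sqrt (2*π))⁻¹)).norm)
  set S : Set ℝ := {ξ : ℝ | δ ≤ |ε * ξ|} with hSdef
  have hSmeas : MeasurableSet S :=
    measurableSet_le measurable_const ((measurable_id.const_mul ε).abs)
  -- translates
  have htrans_mem : ∀ c : ℝ, MemLp (fun x => u (x - c)) 2 (volume : Measure ℝ) := fun c =>
    hu2.comp_measurePreserving (measurePreserving_sub_right volume c)
  have hv2 : ∀ c : ℝ, MemLp (fun x => u (x - c) - u x) 2 (volume : Measure ℝ) := fun c =>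
    (htrans_mem c).sub hu2
  have hv1 : ∀ c : ℝ, Integrable (fun x => u (x - c) - u x) := fun c =>
    (hu1.comp_sub_right c).sub hu1
  have hvm : ∀ c : ℝ, StronglyMeasurable (fun x => u (x - c) - u x) := fun c =>
    (hm.comp_measurable (measurable_id.sub_const c)).sub hm
  set ρε : ℝ → ℝ := fun s => ∫ x : ℝ, (u (x - ε * s) - u x)^2 with hρdef
  have hρ_nonneg : ∀ s, 0 ≤ ρε s := fun s => integral_nonneg fun x => sq_nonneg _
  have hρ_bdd : ∀ s, ρε s ≤ 4 * ∫ x : ℝ, u x ^ 2 := by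
    intro s
    have hti : Integrable (fun x : ℝ => u (x - ε * s)^2) := (htrans_mem (ε*s)).integrable_sq
    have hui : Integrable (fun x : ℝ => u x ^ 2) := hu2.integrable_sq
    have h1 : ρε s ≤ ∫ x : ℝ, (2 * u (x - ε * s)^2 + 2 * u x ^ 2) :=
      integral_mono ((hv2 (ε*s)).integrable_sq) ((hti.const_mul 2).add (hui.const_mul 2))
        (fun x => by nlinarith [sq_nonneg (u (x - ε*s) + u x)])
    have h2 : ∫ x : ℝ, (2 * u (x - ε * s)^2 + 2 * u x ^ 2)
        = 2 * (∫ x : ℝ, u (x - ε * s)^2) + 2 * ∫ x : ℝ, u x ^ 2 := by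
      rw [integral_add (hti.const_mul 2) (hui.const_mul 2), integral_const_mul, integral_const_mul]
    have h3 : ∫ x : ℝ, u (x - ε * s)^2 = ∫ x : ℝ, u x ^ 2 :=
      integral_sub_right_eq_self (fun x => u x ^ 2) (ε * s)
    rw [h2, h3] at h1
    linarith
  have hρmeas : Measurable ρε := by
    have h0 : Measurable fun q : ℝ × ℝ => ENNReal.ofReal ((u (q.2 - ε * q.1) - u q.2)^2) :=
      ((((hm.measurable.comp (measurable_snd.sub (measurable_fst.const_mul ε)))).sub
        (hm.measurable.comp measurable_snd)).pow_const 2).ennreal_ofReal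
    have heq : ρε = fun s => (∫⁻ x : ℝ, ENNReal.ofReal ((u (x - ε * s) - u x)^2)).toReal := by
      funext s
      show (∫ x : ℝ, (u (x - ε * s) - u x)^2)
        = (∫⁻ x : ℝ, ENNReal.ofReal ((u (x - ε * s) - u x)^2)).toReal
      rw [integral_eq_lintegral_of_nonneg_ae (ae_of_all _ fun x => sq_nonneg _)
        (((hvm (ε*s)).measurable.pow_const 2).aestronglyMeasurable)]
    rw [heq]
    exact (Measurable.lintegral_prod_right
      (f := fun s x => ENNReal.ofReal ((u (x - ε * s) - u x)^2)) h0).ennreal_toReal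
  have hρint : Integrable ρε μ := by
    refine Integrable.mono' (integrable_const (4 * ∫ x : ℝ, u x ^ 2))
      hρmeas.aestronglyMeasurable ?_
    filter_upwards with s
    rw [Real.norm_eq_abs, _root_.abs_of_nonneg (hρ_nonneg _)]
    exact hρ_bdd _
  have hρ2εB : ∫ s : ℝ, ρε s ∂μ ≤ 2 * ε * B := by
    have h := mul_le_mul_of_nonneg_left hρbound hε.le
    calc ∫ s : ℝ, ρε s ∂μ = ε * (ε⁻¹ * ∫ s : ℝ, ρε s ∂μ) := by field_simp
      _ ≤ ε * (2 * B) := h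
      _ = 2 * ε * B := by ring
  -- the translated Fourier integral identity
  have hVs : ∀ c ξ : ℝ, (∫ x : ℝ, Complex.exp (-(Complex.I * ξ * x)) * ((u (x - c) - u x : ℝ) : ℂ))
      = (Complex.exp (-(Complex.I * ξ * c)) - 1) * V ξ := by
    intro c ξ
    have h1' : Integrable (fun x : ℝ => (u (x - c) : ℂ)) := (hu1.comp_sub_right c).ofReal
    have hA : Integrable (fun x : ℝ => Complex.exp (-(Complex.I * ξ * x)) * (u (x - c) : ℂ)) := by
      refine Integrable.bdd_mul (c := 1) h1'
        ((Complex.continuous_exp.comp (by continuity)).aestronglyMeasurable) ?_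
      filter_upwards with x
      rw [Complex.norm_exp]; simp
    have hB' : Integrable (fun x : ℝ => Complex.exp (-(Complex.I * ξ * x)) * (u x : ℂ)) := by
      refine Integrable.bdd_mul (c := 1) hu1.ofReal
        ((Complex.continuous_exp.comp (by continuity)).aestronglyMeasurable) ?_
      filter_upwards with x
      rw [Complex.norm_exp]; simp
    have heq : (fun x : ℝ => Complex.exp (-(Complex.I * ξ * x)) * ((u (x - c) - u x : ℝ) : ℂ))
        = fun x : ℝ => Complex.exp (-(Complex.I * ξ * x)) * (u (x - c) : ℂ)
            - Complex.exp (-(Complex.I * ξ * x)) * (u x : ℂ) := by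
      funext x; push_cast; ring
    rw [heq, integral_sub hA hB', trans_V u hu1 ξ c, hVdef]
    ring
  -- the pointwise identity
  have hpt : ∀ s ξ : ℝ, 2 * (1 - Real.cos (ε * ξ * s)) * ‖(Real.sqrt (2*π))⁻¹ • V ξ‖^2
      = (2*π)⁻¹ * ‖∫ x : ℝ, Complex.exp (-(Complex.I * ξ * x)) * ((u (x - ε * s) - u x : ℝ) : ℂ)‖^2 := by
    intro s ξ
    rw [hVs (ε * s) ξ, hFeq, norm_mul, mul_pow]
    rw [show -(Complex.I * (ξ:ℂ) * ((ε * s : ℝ) : ℂ)) = -(Complex.I * ((ξ * (ε * s) : ℝ) : ℂ)) by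
      push_cast; ring]
    rw [norm_emi (ξ * (ε * s))]
    rw [show ξ * (ε * s) = ε * ξ * s by ring]
    ring
  -- integrability of the h-integrand wrt μ
  have hGnn : ∀ ξ : ℝ, ∀ s : ℝ, 0 ≤ 2 * (1 - Real.cos (ε * ξ * s)) := by
    intro ξ s; nlinarith [Real.cos_le_one (ε * ξ * s)]
  have hGint : ∀ ξ : ℝ, Integrable (fun s : ℝ => 2 * (1 - Real.cos (ε * ξ * s))) μ := by
    intro ξ
    refine Integrable.mono' (integrable_const 4)
      ((Continuous.aestronglyMeasurable (by fun_prop))) ?_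
    filter_upwards with s
    rw [Real.norm_eq_abs, _root_.abs_of_nonneg (hGnn ξ s)]
    nlinarith [Real.neg_one_le_cos (ε * ξ * s)]
  -- inner bound per s
  have hinner : ∀ s : ℝ, ∫⁻ ξ : ℝ, ENNReal.ofReal
        (2 * (1 - Real.cos (ε * ξ * s)) * ‖(Real.sqrt (2*π))⁻¹ • V ξ‖^2)
      ≤ ENNReal.ofReal (ρε s) := by
    intro s
    have hpl : ∫⁻ ξ : ℝ, ENNReal.ofReal
          (‖∫ x : ℝ, Complex.exp (-(Complex.I * ξ * x)) * ((u (x - ε * s) - u x : ℝ) : ℂ)‖^2)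
        ≤ ENNReal.ofReal (2 * π * ρε s) :=
      planch_le (fun x => u (x - ε * s) - u x) (hvm _) (hv1 _) (hv2 _)
    calc ∫⁻ ξ : ℝ, ENNReal.ofReal
          (2 * (1 - Real.cos (ε * ξ * s)) * ‖(Real.sqrt (2*π))⁻¹ • V ξ‖^2)
        = ∫⁻ ξ : ℝ, ENNReal.ofReal ((2*π)⁻¹) * ENNReal.ofReal
            (‖∫ x : ℝ, Complex.exp (-(Complex.I * ξ * x)) * ((u (x - ε * s) - u x : ℝ) : ℂ)‖^2) := by
          congr 1; funext ξ
          rw [hpt s ξ, ENNReal.ofReal_mul (by positivity)]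
      _ = ENNReal.ofReal ((2*π)⁻¹) * ∫⁻ ξ : ℝ, ENNReal.ofReal
            (‖∫ x : ℝ, Complex.exp (-(Complex.I * ξ * x)) * ((u (x - ε * s) - u x : ℝ) : ℂ)‖^2) :=
          lintegral_const_mul' _ _ ENNReal.ofReal_ne_top
      _ ≤ ENNReal.ofReal ((2*π)⁻¹) * ENNReal.ofReal (2 * π * ρε s) := mul_le_mul_right hpl _
      _ = ENNReal.ofReal (ρε s) := by
          rw [← ENNReal.ofReal_mul (by positivity)]
          congr 1
          field_simp
  -- joint measurability for swap
  have hjoint : AEMeasurable (fun z : ℝ × ℝ => ENNReal.ofReal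
      (2 * (1 - Real.cos (ε * z.1 * z.2)) * ‖(Real.sqrt (2*π))⁻¹ • V z.1‖^2))
      (volume.prod μ) := by
    have hc : Continuous (fun z : ℝ × ℝ =>
        2 * (1 - Real.cos (ε * z.1 * z.2)) * ‖(Real.sqrt (2*π))⁻¹ • V z.1‖^2) :=
      ((continuous_const.mul (continuous_const.sub
        (Real.continuous_cos.comp (by fun_prop)))).mul (hFcont.comp continuous_fst))
    exact hc.measurable.ennreal_ofReal.aemeasurable
  -- the main chain
  have hchain : ENNReal.ofReal (ηγ * δ^2) *
      ∫⁻ ξ in S, ENNReal.ofReal (‖(Real.sqrt (2*π))⁻¹ • V ξ‖^2)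
      ≤ ENNReal.ofReal (2 * ε * B) := by
    calc ENNReal.ofReal (ηγ * δ^2) * ∫⁻ ξ in S, ENNReal.ofReal (‖(Real.sqrt (2*π))⁻¹ • V ξ‖^2)
        = ∫⁻ ξ in S, ENNReal.ofReal (ηγ * δ^2) * ENNReal.ofReal (‖(Real.sqrt (2*π))⁻¹ • V ξ‖^2) :=
          (lintegral_const_mul' _ _ ENNReal.ofReal_ne_top).symm
      _ ≤ ∫⁻ ξ in S, ENNReal.ofReal (∫ s : ℝ, 2 * (1 - Real.cos (ε * ξ * s)) ∂μ) *
            ENNReal.ofReal (‖(Real.sqrt (2*π))⁻¹ • V ξ‖^2) := by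
          refine lintegral_mono_ae ?_
          rw [ae_restrict_iff' hSmeas]
          filter_upwards with ξ hξ
          exact mul_le_mul_left (ENNReal.ofReal_le_ofReal (hlowδ (ε * ξ) hξ)) _
      _ ≤ ∫⁻ ξ : ℝ, ENNReal.ofReal (∫ s : ℝ, 2 * (1 - Real.cos (ε * ξ * s)) ∂μ) *
            ENNReal.ofReal (‖(Real.sqrt (2*π))⁻¹ • V ξ‖^2) :=
          setLIntegral_le_lintegral _ _
      _ = ∫⁻ ξ : ℝ, ∫⁻ s : ℝ, ENNReal.ofReal
            (2 * (1 - Real.cos (ε * ξ * s)) * ‖(Real.sqrt (2*π))⁻¹ • V ξ‖^2) ∂μ := by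
          congr 1; funext ξ
          exact step_mul μ _ (hGint ξ) (hGnn ξ) _
      _ = ∫⁻ s : ℝ, ∫⁻ ξ : ℝ, ENNReal.ofReal
            (2 * (1 - Real.cos (ε * ξ * s)) * ‖(Real.sqrt (2*π))⁻¹ • V ξ‖^2) ∂volume ∂μ :=
          lintegral_lintegral_swap (f := fun ξ s => ENNReal.ofReal
            (2 * (1 - Real.cos (ε * ξ * s)) * ‖(Real.sqrt (2*π))⁻¹ • V ξ‖^2)) hjoint
      _ ≤ ∫⁻ s : ℝ, ENNReal.ofReal (ρε s) ∂μ := lintegral_mono' le_rfl hinner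
      _ = ENNReal.ofReal (∫ s : ℝ, ρε s ∂μ) :=
          (ofReal_integral_eq_lintegral_ofReal hρint (ae_of_all _ hρ_nonneg)).symm
      _ ≤ ENNReal.ofReal (2 * ε * B) := ENNReal.ofReal_le_ofReal hρ2εB
  -- conclude
  have hηδ : (0:ℝ) < ηγ * δ^2 := by positivity
  have hmain : ∫⁻ ξ in S, ENNReal.ofReal (‖(Real.sqrt (2*π))⁻¹ • V ξ‖^2)
      ≤ ENNReal.ofReal ((2 * ε / (ηγ * δ^2)) * B) := by
    have hdiv : ∫⁻ ξ in S, ENNReal.ofReal (‖(Real.sqrt (2*π))⁻¹ • V ξ‖^2)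
        ≤ ENNReal.ofReal (2 * ε * B) / ENNReal.ofReal (ηγ * δ^2) := by
      rw [ENNReal.le_div_iff_mul_le (Or.inl (by simp [hηδ])) (Or.inl ENNReal.ofReal_ne_top)]
      rw [mul_comm]
      exact hchain
    refine hdiv.trans ?_
    rw [← ENNReal.ofReal_div_of_pos hηδ]
    apply ENNReal.ofReal_le_ofReal
    exact le_of_eq (by ring)
  rw [integral_eq_lintegral_of_nonneg_ae (ae_of_all _ fun ξ => by positivity)
    hFcont.aestronglyMeasurable.restrict]
  exact ENNReal.toReal_le_of_le_ofReal (by positivity) hmain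

/-- Let `γ` satisfy the standing kernel assumptions with derivative measure `μ`
(supported in `(-∞,0]`), `ε > 0`, and `u ∈ L¹ ∩ L²(ℝ)` with unitary Fourier transform `û`.
Assume the rescaled bound `∫ ρ(s) γ'_ε(ds) = ε⁻¹ ∫ ρ(εs) dμ(s) ≤ 2B` where
`ρ(s) = ∫ (u(x-s) - u(x))² dx`, and the lower bound `h(z) ≥ η_γ δ²` for `|z| ≥ δ`,
`0 < δ < δ_γ`, with `h(z) = ∫ 2(1-cos(zs)) dμ(s)`. Then for every `δ ∈ (0, δ_γ)`,
`∫_{|εξ| ≥ δ} |û(ξ)|² dξ ≤ (2ε/(η_γ δ²)) B`. -/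
theorem stmt9 (γ : ℝ → ℝ) (ε B δγ ηγ : ℝ) (hε : 0 < ε) (hB : 0 ≤ B)
    (hδγ : 0 < δγ) (hηγ : 0 < ηγ) (u : ℝ → ℝ)
    (hγpos : ∀ z, 0 ≤ γ z)
    (hsupp : Function.support γ ⊆ Iic 0)
    (hint : Integrable γ)
    (hmass : ∫ z in Iic (0:ℝ), γ z = 1)
    (hmono : MonotoneOn γ (Iic 0))
    (hconv : ConvexOn ℝ (Iic 0) γ)
    (hBV : eVariationOn γ univ ≠ ⊤)
    (μ : Measure ℝ) [IsFiniteMeasure μ]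
    (hμsupp : μ (Ioi 0) = 0)
    (hderiv : ∀ a : ℝ, a ≤ 0 → γ 0 - γ a = (μ (Ioc a 0)).toReal)
    (hu2 : MemLp u 2 (volume : Measure ℝ))
    (hu1 : Integrable u)
    (hρbound : ε⁻¹ * ∫ s : ℝ, (∫ x : ℝ, (u (x - ε * s) - u x)^2) ∂μ ≤ 2 * B)
    (hlow : ∀ δ : ℝ, 0 < δ → δ < δγ → ∀ z : ℝ, δ ≤ |z| →
      ηγ * δ^2 ≤ ∫ s : ℝ, 2 * (1 - Real.cos (z * s)) ∂μ) :
    ∀ δ : ℝ, 0 < δ → δ < δγ →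
      ∫ ξ in {ξ : ℝ | δ ≤ |ε * ξ|},
          ‖(Real.sqrt (2 * π))⁻¹ •
            ∫ x : ℝ, Complex.exp (-(Complex.I * (ξ:ℂ) * (x:ℂ))) * (u x : ℂ)‖^2
        ≤ (2 * ε / (ηγ * δ^2)) * B := by
  intro δ hδ0 hδδ
  -- pass to a strongly measurable representative
  obtain ⟨w, hw, huw⟩ : ∃ w : ℝ → ℝ, StronglyMeasurable w ∧ u =ᵐ[volume] w :=
    ⟨hu1.1.mk u, hu1.1.stronglyMeasurable_mk, hu1.1.ae_eq_mk⟩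
  have hu2' : MemLp w 2 (volume : Measure ℝ) := hu2.ae_eq huw
  have hu1' : Integrable w := hu1.congr huw
  have htr : ∀ c : ℝ, (fun x : ℝ => u (x - c)) =ᵐ[volume] fun x : ℝ => w (x - c) := fun c =>
    (measurePreserving_sub_right volume c).quasiMeasurePreserving.ae_eq_comp huw
  have hρeq : (fun s : ℝ => ∫ x : ℝ, (u (x - ε * s) - u x)^2)
      = fun s : ℝ => ∫ x : ℝ, (w (x - ε * s) - w x)^2 := by
    funext s
    refine integral_congr_ae ?_
    filter_upwards [htr (ε * s), huw] with x h1 h2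
    rw [h1, h2]
  rw [hρeq] at hρbound
  have hVeq : (fun ξ : ℝ => ‖(Real.sqrt (2 * π))⁻¹ •
        ∫ x : ℝ, Complex.exp (-(Complex.I * (ξ:ℂ) * (x:ℂ))) * (u x : ℂ)‖^2)
      = fun ξ : ℝ => ‖(Real.sqrt (2 * π))⁻¹ •
        ∫ x : ℝ, Complex.exp (-(Complex.I * (ξ:ℂ) * (x:ℂ))) * (w x : ℂ)‖^2 := by
    funext ξ
    have h : (∫ x : ℝ, Complex.exp (-(Complex.I * (ξ:ℂ) * (x:ℂ))) * (u x : ℂ))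
        = ∫ x : ℝ, Complex.exp (-(Complex.I * (ξ:ℂ) * (x:ℂ))) * (w x : ℂ) :=
      integral_congr_ae (by filter_upwards [huw] with x hx; rw [hx])
    rw [h]
  rw [hVeq]
  exact key_main ε B ηγ hε hB hηγ μ w hw hu2' hu1' hρbound δ hδ0
    (fun z hz => hlow δ hδ0 hδδ z hz)
end

section
/- Let γ satisfy the standing kernel assumptions, u ∈ L²(ℝ), and w := γ_ε * u. Then in the Fourier domain ŵ(ξ) = ĝ_ε(ξ) û(ξ) with ĝ_ε(ξ) = ∫_{-∞}^0 e^{-iεξz} γ(z) dz, and ĝ_ε(ξ) ≠ 0 for every ξ ∈ ℝ and ε > 0; hence û(ξ) = ŵ(ξ)/ĝ_ε(ξ) is well defined for every ξ. -/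
open MeasureTheory Filter Set Topology

-- constancy of convex antitone function after a flat step
lemma flat_const {f : ℝ → ℝ} (hconv : ConvexOn ℝ (Ici 0) f) (hanti : AntitoneOn f (Ici 0))
    {s h : ℝ} (hs : 0 ≤ s) (hh : 0 < h) (heq : f s = f (s + h))
    {x : ℝ} (hx : s ≤ x) : f x = f s := by
  have hx0 : (0:ℝ) ≤ x := hs.trans hx
  have hsh0 : (0:ℝ) ≤ s + h := by linarith
  rcases le_or_gt x (s + h) with hxl | hxr
  · have h1 : f (s+h) ≤ f x := hanti hx0 hsh0 hxl
    have h2 : f x ≤ f s := hanti hs hx0 hx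
    linarith
  · -- x > s + h; use convexity at point s+h between s and x
    have hxs : 0 < x - s := by linarith
    set a : ℝ := (x - (s+h)) / (x - s) with ha
    set b : ℝ := h / (x - s) with hb
    have ha0 : 0 ≤ a := div_nonneg (by linarith) hxs.le
    have hb0 : 0 ≤ b := div_nonneg hh.le hxs.le
    have hb' : 0 < b := div_pos hh hxs
    have hab : a + b = 1 := by
      rw [ha, hb, ← add_div, show x - (s+h) + h = x - s by ring, div_self hxs.ne']
    have hcomb : a * s + b * x = s + h := by
      rw [ha, hb]
      field_simp
      ring
    have hcx := hconv.2 (mem_Ici.2 hs) (mem_Ici.2 hx0) ha0 hb0 hab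
    rw [smul_eq_mul, smul_eq_mul, smul_eq_mul, smul_eq_mul, hcomb, heq] at hcx
    -- f(s+h) ≤ a f(s+h) + b f x
    have h3 : a * f (s+h) + b * f (s+h) = f (s+h) := by
      have := congrArg (fun r => r * f (s+h)) hab
      simpa [add_mul] using this
    have key : b * f (s+h) ≤ b * f x := by linarith
    have h1 : f (s+h) ≤ f x := le_of_mul_le_mul_left key hb'
    have h2 : f x ≤ f (s+h) := hanti hsh0 hx0 (by linarith)
    linarith

lemma sin_transform_pos {f : ℝ → ℝ} {t : ℝ} (ht : 0 < t)
    (hpos : ∀ s, 0 ≤ f s)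
    (hanti : AntitoneOn f (Ici 0))
    (hconv : ConvexOn ℝ (Ici 0) f)
    (hfi : IntegrableOn f (Ioi 0))
    (hm : ∫ s in Ioi (0:ℝ), f s = 1) :
    0 < ∫ s in Ioi (0:ℝ), Real.sin (t * s) * f s := by
  set g : ℝ → ℝ := fun s => Real.sin (t * s) * f s with hg
  set h : ℝ := Real.pi / t with hhdef
  have hπ := Real.pi_pos
  have hh : 0 < h := div_pos hπ ht
  have hth : t * h = Real.pi := by
    rw [hhdef]; field_simp
  -- integrability of g on Ioi 0
  have hgi : IntegrableOn g (Ioi 0) := by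
    refine Integrable.bdd_mul hfi ?_ (c := 1) (Filter.Eventually.of_forall fun x => ?_)
    · exact (Real.continuous_sin.comp (continuous_const.mul continuous_id)).aestronglyMeasurable
    · simpa using Real.abs_sin_le_one (t * x)
  -- interval integrability of g on nonneg intervals
  have hgint : ∀ a b : ℝ, 0 ≤ a → 0 ≤ b → IntervalIntegrable g volume a b := by
    intro a b ha hb
    rw [intervalIntegrable_iff]
    exact hgi.mono_set (fun x hx => lt_of_le_of_lt (le_min ha hb) hx.1)
  -- the shifted pieces
  set A : ℕ → ℝ → ℝ := fun k s => Real.sin (t * s) * f (s + k * h) with hA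
  set a : ℕ → ℝ := fun k => ∫ s in (0:ℝ)..h, A k s with ha
  have hgshift : ∀ (k : ℕ) (s : ℝ), g (s + k * h) = (-1)^k * A k s := by
    intro k s
    show Real.sin (t * (s + k*h)) * f (s + k*h) = _
    have he : t * (s + k*h) = t*s + k * Real.pi := by
      rw [mul_add, show t * ((k:ℝ)*h) = (k:ℝ) * (t*h) by ring, hth]
    rw [he]
    have hsin := Real.sin_add_int_mul_pi (t*s) (k : ℤ)
    push_cast [zpow_natCast] at hsin
    rw [hsin, hA]
    ring
  have hAint : ∀ k : ℕ, IntervalIntegrable (A k) volume 0 h := by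
    intro k
    have h1 : IntervalIntegrable g volume (0 + k*h) (h + k*h) :=
      hgint _ _ (by positivity) (by positivity)
    have h2 := h1.comp_add_right ((k:ℝ)*h)
    simp only [add_sub_cancel_right] at h2
    have hid : A k = fun s => (-1:ℝ)^k * g (s + k*h) := by
      funext s
      rw [hgshift k s, ← mul_assoc, ← mul_pow]
      norm_num
    rw [hid]
    exact h2.const_mul _
  -- nonnegativity of sin on [0,h]
  have hsin : ∀ s ∈ Icc (0:ℝ) h, 0 ≤ Real.sin (t*s) := by
    intro s hs
    refine Real.sin_nonneg_of_nonneg_of_le_pi (mul_nonneg ht.le hs.1) ?_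
    rw [← hth]
    exact mul_le_mul_of_nonneg_left hs.2 ht.le
  have ha_nonneg : ∀ k, 0 ≤ a k := by
    intro k
    refine intervalIntegral.integral_nonneg hh.le (fun s hs => ?_)
    exact mul_nonneg (hsin s hs) (hpos _)
  have ha_step : ∀ k : ℕ, a (k+1) ≤ a k := by
    intro k
    refine intervalIntegral.integral_mono_on hh.le (hAint (k+1)) (hAint k) (fun s hs => ?_)
    refine mul_le_mul_of_nonneg_left ?_ (hsin s hs)
    have h1 : (0:ℝ) ≤ s + k*h := by have := hs.1; positivity
    have h2 : s + (k:ℝ)*h ≤ s + ((k:ℕ)+1:ℕ)*h := by push_cast; nlinarith [hh]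
    have := hanti (mem_Ici.2 h1) (mem_Ici.2 (h1.trans h2)) h2
    convert this using 3 <;> push_cast <;> ring
  -- the segment integrals
  have hseg : ∀ m : ℕ, ∫ s in ((m:ℝ)*h)..(((m:ℝ)+1)*h), g s = (-1:ℝ)^m * a m := by
    intro m
    have e1 := intervalIntegral.integral_comp_add_right (a := 0) (b := h) (f := g) ((m:ℝ)*h)
    rw [zero_add] at e1
    rw [show ((m:ℝ)+1)*h = h + (m:ℝ)*h by ring, ← e1]
    rw [show (fun x => g (x + (m:ℝ)*h)) = fun x => (-1:ℝ)^m * A m x from funext (hgshift m)]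
    rw [intervalIntegral.integral_const_mul]
  set F : ℕ → ℝ := fun m => ∫ s in (0:ℝ)..((m:ℝ)*h), g s with hF
  have hstep : ∀ m : ℕ, F (m+1) = F m + (-1:ℝ)^m * a m := by
    intro m
    rw [← hseg m]
    rw [hF]
    push_cast
    rw [← intervalIntegral.integral_add_adjacent_intervals
      (hgint 0 ((m:ℝ)*h) le_rfl (by positivity))
      (hgint ((m:ℝ)*h) (((m:ℝ)+1)*h) (by positivity) (by positivity))]
  have hF0 : F 0 = 0 := by simp [hF]
  have hF2 : F 2 = a 0 - a 1 := by
    rw [show (2:ℕ) = 1 + 1 from rfl, hstep 1, hstep 0, hF0]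
    norm_num
    ring
  -- monotonicity of even partial integrals
  have hE : ∀ m : ℕ, F (2*m) ≤ F (2*(m+1)) := by
    intro m
    have e1 : F (2*(m+1)) = F (2*m) + a (2*m) - a (2*m+1) := by
      rw [show 2*(m+1) = (2*m+1)+1 by ring, hstep (2*m+1), hstep (2*m)]
      have p1 : (-1:ℝ)^(2*m) = 1 := by rw [pow_mul]; norm_num
      have p2 : (-1:ℝ)^(2*m+1) = -1 := by rw [pow_succ, p1]; norm_num
      rw [p1, p2]; ring
    have := ha_step (2*m)
    linarith [e1]
  have hmonoE : Monotone (fun m => F (2*m)) := monotone_nat_of_le_succ hE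
  -- limit
  have htend : Tendsto (fun m : ℕ => ((2*m : ℕ) : ℝ)*h) atTop atTop := by
    refine Tendsto.atTop_mul_const hh ?_
    exact tendsto_natCast_atTop_atTop.comp
      (tendsto_atTop_atTop.2 (fun b => ⟨b, fun a ha => by omega⟩))
  have hlim : Tendsto (fun m : ℕ => F (2*m)) atTop (𝓝 (∫ s in Ioi (0:ℝ), g s)) :=
    intervalIntegral_tendsto_integral_Ioi 0 hgi htend
  have hge : F 2 ≤ ∫ s in Ioi (0:ℝ), g s := by
    refine ge_of_tendsto hlim ?_
    refine eventually_atTop.2 ⟨1, fun m hm => ?_⟩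
    simpa using hmonoE hm
  -- positivity of a 0 - a 1
  have hφeq : ∀ s : ℝ, A 0 s - A 1 s = Real.sin (t*s) * (f s - f (s+h)) := by
    intro s
    rw [hA]
    push_cast
    simp only [zero_mul, add_zero, one_mul]
    ring
  have hcont : ContinuousOn f (Ioi 0) :=
    (hconv.subset (Ioi_subset_Ici le_rfl) (convex_Ioi 0)).continuousOn isOpen_Ioi
  -- existence of a strict decrease point
  have hexists : ∃ s ∈ Ioo 0 h, f (s+h) < f s := by
    by_contra hcon
    push_neg at hcon
    have heqq : ∀ s ∈ Ioo (0:ℝ) h, f s = f (s+h) := by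
      intro s hs
      refine le_antisymm (hcon s hs) ?_
      exact hanti (mem_Ici.2 hs.1.le)
        (mem_Ici.2 (by linarith [hs.1.le, hh.le] : (0:ℝ) ≤ s + h))
        (le_add_of_nonneg_right hh.le)
    have hc0 : ∀ x, h/2 ≤ x → f x = f (h/2) := by
      intro x hx
      exact flat_const hconv hanti (by linarith) hh
        (heqq (h/2) ⟨by linarith, by linarith⟩) hx
    have hi2 : IntegrableOn f (Ioi (h/2)) :=
      hfi.mono_set (fun x hx => lt_trans (by linarith : (0:ℝ) < h/2) hx)
    have hic : IntegrableOn (fun _ : ℝ => f (h/2)) (Ioi (h/2)) :=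
      hi2.congr_fun (fun x hx => (hc0 x (le_of_lt hx)).symm ▸ rfl) measurableSet_Ioi
    rw [integrableOn_const_iff] at hic
    have hval : f (h/2) = 0 := by
      rcases hic with h0 | hfin
      · exact enorm_eq_zero.1 h0
      · exfalso; rw [Real.volume_Ioi] at hfin; exact (lt_irrefl _ hfin).elim
    have hzero : ∀ x ∈ Ioi (0:ℝ), f x = 0 := by
      intro x hx
      rcases le_or_gt (h/2) x with hge | hlt
      · rw [hc0 x hge, hval]
      · have h1 : f x = f (x+h) := heqq x ⟨hx, by linarith⟩
        have h2 : f (x+h) = f (h/2) := hc0 _ (by linarith [mem_Ioi.1 hx])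
        rw [h1, h2, hval]
    have : ∫ s in Ioi (0:ℝ), f s = 0 := by
      rw [setIntegral_congr_fun measurableSet_Ioi hzero]
      simp
    rw [hm] at this
    norm_num at this
  obtain ⟨sstar, hsmem, hslt⟩ := hexists
  -- the function sin(ts)(f s - f(s+h)) is continuous at sstar and positive there
  set φ : ℝ → ℝ := fun s => Real.sin (t*s) * (f s - f (s+h)) with hφ
  have hφs : 0 < φ sstar := by
    refine mul_pos ?_ (by linarith)
    exact Real.sin_pos_of_pos_of_lt_pi (mul_pos ht hsmem.1)
      (by rw [← hth]; exact (mul_lt_mul_iff_right₀ ht).2 hsmem.2)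
  have hφcont : ContinuousAt φ sstar := by
    have hf1 : ContinuousAt f sstar := hcont.continuousAt (isOpen_Ioi.mem_nhds hsmem.1)
    have hf2 : ContinuousAt (fun s => f (s + h)) sstar := by
      have : ContinuousAt f (sstar + h) :=
        hcont.continuousAt (isOpen_Ioi.mem_nhds (by simp; nlinarith [hsmem.1]))
      exact ContinuousAt.comp this ((continuous_add_right h).continuousAt)
    exact ((Real.continuous_sin.comp (continuous_const.mul continuous_id)).continuousAt).mul
      (hf1.sub hf2)
  have hev : {s : ℝ | 0 < φ s ∧ s ∈ Ioo 0 h} ∈ 𝓝 sstar := by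
    have h1 : ∀ᶠ s in 𝓝 sstar, 0 < φ s := hφcont.eventually (eventually_gt_nhds hφs)
    have h2 : ∀ᶠ s in 𝓝 sstar, s ∈ Ioo (0:ℝ) h := isOpen_Ioo.mem_nhds hsmem
    exact (h1.and h2)
  obtain ⟨l, r, hlr, hsub⟩ := mem_nhds_iff_exists_Ioo_subset.1 hev
  have hl0 : 0 ≤ l := by
    by_contra hl
    push_neg at hl
    have : l/2 ∈ Ioo l r := ⟨by linarith, by nlinarith [hlr.1, hlr.2, hsmem.1]⟩
    exact absurd (hsub this).2.1 (by linarith)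
  have hrh : r ≤ h := by
    by_contra hr
    push_neg at hr
    have : (h+r)/2 ∈ Ioo l r := ⟨by nlinarith [hlr.1, hlr.2, hsmem.2], by linarith⟩
    exact absurd (hsub this).2.2 (by linarith)
  have hlltr : l < r := lt_trans hlr.1 hlr.2
  -- interval integrability of φ on subintervals of [0,h]
  have hφint : ∀ p q : ℝ, 0 ≤ p → q ≤ h → p ≤ q → IntervalIntegrable φ volume p q := by
    intro p q hp hq hpq
    have hbase : IntervalIntegrable (fun s => A 0 s - A 1 s) volume 0 h :=
      (hAint 0).sub (hAint 1)
    have : IntervalIntegrable (fun s => A 0 s - A 1 s) volume p q := by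
      refine hbase.mono_set ?_
      rw [uIcc_of_le hpq, uIcc_of_le hh.le]
      exact Icc_subset_Icc hp hq
    refine this.congr ?_
    exact fun s _ => hφeq s
  have hφnn : ∀ s ∈ Icc (0:ℝ) h, 0 ≤ φ s := by
    intro s hs
    refine mul_nonneg (hsin s hs) ?_
    have := hanti (mem_Ici.2 hs.1) (mem_Ici.2 (by nlinarith [hs.1] : (0:ℝ) ≤ s + h)) (by linarith)
    linarith
  have hmid : 0 < ∫ s in l..r, φ s := by
    refine intervalIntegral.intervalIntegral_pos_of_pos_on (hφint l r hl0 hrh hlltr.le) (fun x hx => (hsub hx).1) hlltr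
  have hleft : 0 ≤ ∫ s in (0:ℝ)..l, φ s :=
    intervalIntegral.integral_nonneg hl0 (fun s hs => hφnn s ⟨hs.1, hs.2.trans (hrh.trans' hlltr.le)⟩)
  have hright : 0 ≤ ∫ s in r..h, φ s :=
    intervalIntegral.integral_nonneg hrh (fun s hs => hφnn s ⟨(hl0.trans hlltr.le).trans hs.1, hs.2⟩)
  have hsplit : ∫ s in (0:ℝ)..h, φ s
      = (∫ s in (0:ℝ)..l, φ s) + (∫ s in l..r, φ s) + (∫ s in r..h, φ s) := by
    have i1 := hφint 0 l le_rfl (hlltr.le.trans hrh) hl0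
    have i2 := hφint l r hl0 hrh hlltr.le
    have i3 := hφint r h (hl0.trans hlltr.le) le_rfl hrh
    have i12 := hφint 0 r le_rfl hrh (hl0.trans hlltr.le)
    rw [intervalIntegral.integral_add_adjacent_intervals i1 i2,
      intervalIntegral.integral_add_adjacent_intervals i12 i3]
  have hpos01 : 0 < ∫ s in (0:ℝ)..h, φ s := by
    rw [hsplit]; linarith
  have haa : a 0 - a 1 = ∫ s in (0:ℝ)..h, φ s := by
    rw [ha, ← intervalIntegral.integral_sub (hAint 0) (hAint 1)]
    exact intervalIntegral.integral_congr (fun s _ => hφeq s)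
  have : 0 < F 2 := by rw [hF2, haa]; exact hpos01
  linarith [hge]

lemma hatg_ne (γ : ℝ → ℝ) (hγpos : ∀ z, 0 ≤ γ z)
    (hint : Integrable γ) (hmass : ∫ z in Iic (0:ℝ), γ z = 1)
    (hmono : MonotoneOn γ (Iic 0)) (hconv : ConvexOn ℝ (Iic 0) γ)
    (t : ℝ) :
    (∫ z in Iic (0:ℝ), Complex.exp (-(Complex.I * (t:ℂ) * (z:ℂ))) * (γ z : ℂ)) ≠ 0 := by
  rcases eq_or_ne t 0 with rfl | ht0
  · have hsimp : ∀ z : ℝ, Complex.exp (-(Complex.I * ((0:ℝ):ℂ) * (z:ℂ))) * (γ z : ℂ)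
        = ((γ z : ℝ) : ℂ) := by
      intro z; norm_num
    simp only [hsimp]
    have h0 : (∫ z in Iic (0:ℝ), ((γ z : ℝ) : ℂ)) = ((∫ z in Iic (0:ℝ), γ z : ℝ) : ℂ) :=
      integral_ofReal
    have h1 : (∫ z in Iic (0:ℝ), ((γ z : ℝ) : ℂ)) = (1:ℂ) := by rw [h0, hmass]; norm_num
    rw [h1]
    exact one_ne_zero
  · -- reflection setup
    set f : ℝ → ℝ := fun x => γ (-x) with hf
    have hfpos : ∀ s, 0 ≤ f s := fun s => hγpos _
    have hfanti : AntitoneOn f (Ici 0) := by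
      intro p hp q hq hpq
      exact hmono (mem_Iic.2 (by simpa using (hp.trans hpq : (0:ℝ) ≤ q)))
        (mem_Iic.2 (by simpa using (hp : (0:ℝ) ≤ p))) (by linarith)
    have hfconv : ConvexOn ℝ (Ici 0) f := by
      refine ⟨convex_Ici 0, ?_⟩
      intro x hx y hy p q hp hq hpq
      have := hconv.2 (mem_Iic.2 (neg_nonpos.2 hx)) (mem_Iic.2 (neg_nonpos.2 hy)) hp hq hpq
      simp only [smul_eq_mul] at this ⊢
      rw [hf]
      have harg : -(p*x + q*y) = p * (-x) + q * (-y) := by ring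
      simpa [harg] using this
    have hfint : Integrable f := by
      have := (Measure.measurePreserving_neg (volume : Measure ℝ)).integrable_comp
        hint.aestronglyMeasurable
      exact this.2 hint
    have hfmass : ∫ x in Ioi (0:ℝ), f x = 1 := by
      have := integral_comp_neg_Ioi (0:ℝ) γ
      rw [neg_zero] at this
      rw [hf]
      simpa using this.trans hmass
    have Spos : ∀ r : ℝ, 0 < r → (∫ z in Iic (0:ℝ), Real.sin (r*z) * γ z) < 0 := by
      intro r hr
      have hcore := sin_transform_pos hr hfpos hfanti hfconv hfint.integrableOn hfmass
      have hrefl : (∫ z in Iic (0:ℝ), Real.sin (r*z) * γ z)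
          = ∫ x in Ioi (0:ℝ), Real.sin (r * (-x)) * γ (-x) := by
        have := integral_comp_neg_Ioi (0:ℝ) (fun z => Real.sin (r*z) * γ z)
        rw [neg_zero] at this
        exact this.symm
      rw [hrefl]
      have : (fun x => Real.sin (r * (-x)) * γ (-x)) = fun x => -(Real.sin (r*x) * f x) := by
        funext x
        rw [hf, show r * (-x) = -(r*x) by ring, Real.sin_neg]
        ring
      rw [this, integral_neg]
      linarith
    -- imaginary part computation
    set S : ℝ := ∫ z in Iic (0:ℝ), Real.sin (t*z) * γ z with hS
    have hcosint : Integrable (fun z => Real.cos (t*z) * γ z) (volume.restrict (Iic (0:ℝ))) := by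
      refine Integrable.bdd_mul hint.restrict ?_ (c := 1) (Filter.Eventually.of_forall fun x => ?_)
      · exact (Real.continuous_cos.comp (continuous_const.mul continuous_id)).aestronglyMeasurable
      · simpa using Real.abs_cos_le_one (t*x)
    have hsinint : Integrable (fun z => Real.sin (t*z) * γ z) (volume.restrict (Iic (0:ℝ))) := by
      refine Integrable.bdd_mul hint.restrict ?_ (c := 1) (Filter.Eventually.of_forall fun x => ?_)
      · exact (Real.continuous_sin.comp (continuous_const.mul continuous_id)).aestronglyMeasurable
      · simpa using Real.abs_sin_le_one (t*x)
    have hdecomp : ∀ z : ℝ, Complex.exp (-(Complex.I * (t:ℂ) * (z:ℂ))) * (γ z : ℂ)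
        = ((Real.cos (t*z) * γ z : ℝ) : ℂ) + ((-(Real.sin (t*z) * γ z) : ℝ) : ℂ) * Complex.I := by
      intro z
      have he : -(Complex.I * (t:ℂ) * (z:ℂ)) = ((-(t*z) : ℝ) : ℂ) * Complex.I := by
        push_cast; ring
      rw [he, Complex.exp_mul_I]
      rw [← Complex.ofReal_cos, ← Complex.ofReal_sin, Real.cos_neg, Real.sin_neg]
      push_cast
      ring
    have hGim : (∫ z in Iic (0:ℝ), Complex.exp (-(Complex.I * (t:ℂ) * (z:ℂ))) * (γ z : ℂ)).im
        = -S := by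
      simp only [hdecomp]
      have h2 : Integrable (fun z : ℝ => ((-(Real.sin (t*z) * γ z) : ℝ) : ℂ) * Complex.I)
          (volume.restrict (Iic (0:ℝ))) := (hsinint.neg.ofReal).mul_const _
      have h1 : Integrable (fun z : ℝ => ((Real.cos (t*z) * γ z : ℝ) : ℂ))
          (volume.restrict (Iic (0:ℝ))) := hcosint.ofReal
      rw [integral_add h1 h2, integral_mul_const]
      have e1 : (∫ z in Iic (0:ℝ), ((Real.cos (t*z) * γ z : ℝ) : ℂ))
          = ((∫ z in Iic (0:ℝ), Real.cos (t*z) * γ z : ℝ) : ℂ) := integral_ofReal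
      have e2 : (∫ z in Iic (0:ℝ), ((-(Real.sin (t*z) * γ z) : ℝ) : ℂ))
          = ((∫ z in Iic (0:ℝ), -(Real.sin (t*z) * γ z) : ℝ) : ℂ) := integral_ofReal
      rw [e1, e2, integral_neg]
      simp [hS]
    have hSne : S ≠ 0 := by
      rcases lt_or_gt_of_ne ht0 with hneg | hpos
      · -- t < 0
        have h1 : S = -∫ z in Iic (0:ℝ), Real.sin ((-t)*z) * γ z := by
          rw [← integral_neg]
          refine setIntegral_congr_fun measurableSet_Iic (fun z _ => ?_)
          rw [show (-t)*z = -(t*z) by ring, Real.sin_neg]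
          ring
        have := Spos (-t) (by linarith)
        rw [h1]
        intro hcon
        rw [neg_eq_zero] at hcon
        rw [hcon] at this
        exact lt_irrefl _ this
      · exact ne_of_lt (Spos t hpos)
    intro hcon
    rw [hcon] at hGim
    simp only [Complex.zero_im] at hGim
    exact hSne (by linarith)

set_option maxHeartbeats 1000000 in
/-- For a standing kernel `γ`, `u ∈ L¹ ∩ L²(ℝ)` and `w = γ_ε * u`, one has in
the Fourier domain `ŵ(ξ) = ĝ_ε(ξ) û(ξ)` with `ĝ_ε(ξ) = ∫_{-∞}^0 e^{-iεξz} γ(z) dz`, and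
`ĝ_ε(ξ) ≠ 0` for every `ξ ∈ ℝ`; hence `û(ξ) = ŵ(ξ)/ĝ_ε(ξ)` for every `ξ`. -/
theorem stmt12 (γ : ℝ → ℝ) (ε : ℝ) (hε : 0 < ε) (u : ℝ → ℝ)
    (hγpos : ∀ z, 0 ≤ γ z)
    (hsupp : Function.support γ ⊆ Iic 0)
    (hint : Integrable γ)
    (hmass : ∫ z in Iic (0:ℝ), γ z = 1)
    (hmom : Integrable (fun z => |z| * γ z))
    (hmono : MonotoneOn γ (Iic 0))
    (hconv : ConvexOn ℝ (Iic 0) γ)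
    (hBV : eVariationOn γ univ ≠ ⊤)
    (hu2 : MemLp u 2 (volume : Measure ℝ))
    (hu1 : Integrable u)
    (γε : ℝ → ℝ) (hγε : ∀ x, γε x = ε⁻¹ * γ (x / ε))
    (w : ℝ → ℝ) (hw : ∀ x, w x = ∫ y : ℝ, γε (x - y) * u y) :
    (∀ ξ : ℝ,
        (∫ x : ℝ, Complex.exp (-(Complex.I * (ξ:ℂ) * (x:ℂ))) * (w x : ℂ))
          = (∫ z in Iic (0:ℝ),
                Complex.exp (-(Complex.I * (ε:ℂ) * (ξ:ℂ) * (z:ℂ))) * (γ z : ℂ))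
            * ∫ x : ℝ, Complex.exp (-(Complex.I * (ξ:ℂ) * (x:ℂ))) * (u x : ℂ)) ∧
    (∀ ξ : ℝ,
        (∫ z in Iic (0:ℝ),
            Complex.exp (-(Complex.I * (ε:ℂ) * (ξ:ℂ) * (z:ℂ))) * (γ z : ℂ)) ≠ 0) ∧
    ∀ ξ : ℝ,
      (∫ x : ℝ, Complex.exp (-(Complex.I * (ξ:ℂ) * (x:ℂ))) * (u x : ℂ))
        = (∫ x : ℝ, Complex.exp (-(Complex.I * (ξ:ℂ) * (x:ℂ))) * (w x : ℂ))
          / (∫ z in Iic (0:ℝ),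
                Complex.exp (-(Complex.I * (ε:ℂ) * (ξ:ℂ) * (z:ℂ))) * (γ z : ℂ)) := by
  have hεne : ε ≠ 0 := hε.ne'
  -- nonvanishing (Part 2)
  have hB : ∀ ξ : ℝ,
      (∫ z in Iic (0:ℝ),
          Complex.exp (-(Complex.I * (ε:ℂ) * (ξ:ℂ) * (z:ℂ))) * (γ z : ℂ)) ≠ 0 := by
    intro ξ
    have hexp : ∀ z : ℝ, Complex.exp (-(Complex.I * (ε:ℂ) * (ξ:ℂ) * (z:ℂ)))
        = Complex.exp (-(Complex.I * ((ε*ξ : ℝ):ℂ) * (z:ℂ))) := by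
      intro z; congr 1; push_cast; ring
    simp only [hexp]
    exact hatg_ne γ hγpos hint hmass hmono hconv (ε*ξ)
  -- convolution identity (Part 1)
  have hA : ∀ ξ : ℝ,
      (∫ x : ℝ, Complex.exp (-(Complex.I * (ξ:ℂ) * (x:ℂ))) * (w x : ℂ))
        = (∫ z in Iic (0:ℝ),
              Complex.exp (-(Complex.I * (ε:ℂ) * (ξ:ℂ) * (z:ℂ))) * (γ z : ℂ))
          * ∫ x : ℝ, Complex.exp (-(Complex.I * (ξ:ℂ) * (x:ℂ))) * (u x : ℂ) := by
    intro ξ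
    obtain ⟨γe, hγe⟩ : ∃ γe : ℝ → ℝ, γe = fun x => ε⁻¹ * γ (x / ε) := ⟨_, rfl⟩
    have hγeq : γε = γe := by rw [hγe]; exact funext hγε
    obtain ⟨e, he⟩ : ∃ e : ℝ → ℂ,
        e = fun x : ℝ => Complex.exp (-(Complex.I * (ξ:ℂ) * (x:ℂ))) := ⟨_, rfl⟩
    have hγeint : Integrable γe := by
      rw [hγe]
      exact (hint.comp_div hεne).const_mul _
    have henorm : ∀ x : ℝ, ‖e x‖ = 1 := by
      intro x
      rw [he]
      simp only [Complex.norm_exp]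
      norm_num
    have hadd : ∀ x y : ℝ, e (x + y) = e x * e y := by
      intro x y
      rw [he]
      simp only []
      rw [← Complex.exp_add]
      congr 1
      push_cast
      ring
    obtain ⟨Φ, hΦ⟩ : ∃ Φ : ℝ × ℝ → ℂ,
        Φ = fun p : ℝ × ℝ => e p.1 * ((γe (p.1 - p.2) * u p.2 : ℝ) : ℂ) := ⟨_, rfl⟩
    obtain ⟨Ψ, hΨ⟩ : ∃ Ψ : ℝ × ℝ → ℂ,
        Ψ = fun q : ℝ × ℝ => e (q.1 + q.2) * ((γe q.1 * u q.2 : ℝ) : ℂ) := ⟨_, rfl⟩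
    have hecont : Continuous e := by
      rw [he]
      exact Complex.continuous_exp.comp (by continuity)
    have hΨm : AEStronglyMeasurable Ψ ((volume : Measure ℝ).prod volume) := by
      rw [hΨ]
      refine AEStronglyMeasurable.mul ?_ ?_
      · exact (hecont.comp (continuous_fst.add continuous_snd)).aestronglyMeasurable
      · exact Complex.continuous_ofReal.comp_aestronglyMeasurable
          ((hγeint.aestronglyMeasurable.comp_fst).mul (hu1.aestronglyMeasurable.comp_snd))
    have hbound : Integrable (fun q : ℝ × ℝ => |γe q.1| * |u q.2|)
        ((volume : Measure ℝ).prod volume) := (hγeint.abs).mul_prod (hu1.abs)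
    have hΨi : Integrable Ψ ((volume : Measure ℝ).prod volume) := by
      refine hbound.mono' hΨm ?_
      filter_upwards with q
      rw [hΨ]
      simp only [norm_mul, henorm, one_mul, Complex.norm_real, Real.norm_eq_abs, abs_mul]
      exact le_refl _
    have hT : MeasurePreserving (fun p : ℝ × ℝ => (p.1 - p.2, p.2))
        ((volume : Measure ℝ).prod volume) ((volume : Measure ℝ).prod volume) :=
      measurePreserving_sub_prod volume volume
    have hΦi : Integrable Φ ((volume : Measure ℝ).prod volume) := by
      have hcomp : Ψ ∘ (fun p : ℝ × ℝ => (p.1 - p.2, p.2)) = Φ := by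
        funext p
        rw [hΨ, hΦ]
        simp only [Function.comp_apply, sub_add_cancel]
      rw [← hcomp]
      exact (hT.integrable_comp hΨm).2 hΨi
    -- step 1 : write FT of w as double integral
    have hx : ∀ x : ℝ, e x * ((w x : ℝ) : ℂ) = ∫ y : ℝ, Φ (x, y) := by
      intro x
      rw [hw x]
      have h1 : ((∫ y : ℝ, γε (x - y) * u y : ℝ) : ℂ)
          = ∫ y : ℝ, ((γe (x - y) * u y : ℝ) : ℂ) := by
        rw [hγeq]
        exact integral_ofReal.symm
      rw [h1, ← integral_const_mul]
      congr 1
      funext y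
      rw [hΦ]
    have step1 : (∫ x : ℝ, e x * ((w x : ℝ) : ℂ)) = ∫ x : ℝ, ∫ y : ℝ, Φ (x, y) := by
      simp only [hx]
    -- Fubini
    have step2 : (∫ x : ℝ, ∫ y : ℝ, Φ (x, y)) = ∫ y : ℝ, ∫ x : ℝ, Φ (x, y) :=
      integral_integral_swap (by exact hΦi)
    -- inner integral
    have hinner : ∀ y : ℝ, (∫ x : ℝ, Φ (x, y))
        = (∫ s : ℝ, e s * ((γe s : ℝ) : ℂ)) * (e y * ((u y : ℝ) : ℂ)) := by
      intro y
      have h1 : (fun x : ℝ => Φ (x, y))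
          = fun x : ℝ => (e x * ((γe (x - y) : ℝ) : ℂ)) * ((u y : ℝ) : ℂ) := by
        funext x
        rw [hΦ]
        push_cast
        ring
      rw [h1, integral_mul_const]
      have h2 : (∫ x : ℝ, e x * ((γe (x - y) : ℝ) : ℂ))
          = ∫ x : ℝ, e (x + y) * ((γe (x + y - y) : ℝ) : ℂ) :=
        (integral_add_right_eq_self (fun x => e x * ((γe (x - y) : ℝ) : ℂ)) y).symm
      have h3 : (∫ x : ℝ, e (x + y) * ((γe (x + y - y) : ℝ) : ℂ))
          = ∫ x : ℝ, e y * (e x * ((γe x : ℝ) : ℂ)) := by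
        congr 1
        funext x
        rw [add_sub_cancel_right, hadd]
        ring
      rw [h2, h3, integral_const_mul]
      ring
    have step3 : (∫ y : ℝ, ∫ x : ℝ, Φ (x, y))
        = (∫ s : ℝ, e s * ((γe s : ℝ) : ℂ)) * ∫ y : ℝ, e y * ((u y : ℝ) : ℂ) := by
      simp only [hinner]
      rw [← integral_const_mul]
    -- identify A with the Iic-integral
    have hAB : (∫ s : ℝ, e s * ((γe s : ℝ) : ℂ))
        = ∫ z : ℝ, Complex.exp (-(Complex.I * (ε:ℂ) * (ξ:ℂ) * (z:ℂ))) * ((γ z : ℝ) : ℂ) := by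
      obtain ⟨g, hg⟩ : ∃ g : ℝ → ℂ, g = fun z : ℝ => (ε⁻¹ : ℂ) *
          (Complex.exp (-(Complex.I * (ε:ℂ) * (ξ:ℂ) * (z:ℂ))) * ((γ z : ℝ) : ℂ)) := ⟨_, rfl⟩
      have hc : (ε:ℂ) ≠ 0 := by exact_mod_cast hεne
      have hsub : ∀ x : ℝ, e x * ((γe x : ℝ) : ℂ) = g (x / ε) := by
        intro x
        rw [he, hγe, hg]
        simp only []
        have hex : -(Complex.I * (ξ:ℂ) * (x:ℂ))
            = -(Complex.I * (ε:ℂ) * (ξ:ℂ) * ((x/ε : ℝ) : ℂ)) := by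
          push_cast
          field_simp
        rw [hex]
        push_cast
        ring
      have h1 : (∫ s : ℝ, e s * ((γe s : ℝ) : ℂ)) = ∫ x : ℝ, g (x / ε) := by
        simp only [hsub]
      have hdiv := MeasureTheory.Measure.integral_comp_div g ε
      rw [h1, hdiv, hg, integral_const_mul, abs_of_pos hε, Complex.real_smul, ← mul_assoc,
        mul_inv_cancel₀ hc, one_mul]
    have hBset : (∫ z : ℝ, Complex.exp (-(Complex.I * (ε:ℂ) * (ξ:ℂ) * (z:ℂ))) * ((γ z : ℝ) : ℂ))
        = ∫ z in Iic (0:ℝ),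
        Complex.exp (-(Complex.I * (ε:ℂ) * (ξ:ℂ) * (z:ℂ))) * ((γ z : ℝ) : ℂ) := by
      refine (setIntegral_eq_integral_of_forall_compl_eq_zero (fun z hz => ?_)).symm
      have hzero : γ z = 0 := by
        by_contra hne
        exact hz (hsupp (Function.mem_support.2 hne))
      rw [hzero]
      simp
    have final : (∫ x : ℝ, e x * ((w x : ℝ) : ℂ))
        = (∫ z in Iic (0:ℝ),
              Complex.exp (-(Complex.I * (ε:ℂ) * (ξ:ℂ) * (z:ℂ))) * (γ z : ℂ))
          * ∫ x : ℝ, e x * ((u x : ℝ) : ℂ) := by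
      rw [step1, step2, step3, hAB, hBset]
    simpa only [he] using final
  exact ⟨hA, hB, fun ξ => by rw [hA ξ, mul_div_cancel_left₀ _ (hB ξ)]⟩
end

section
/- Let u_ε(t,·) ∈ L²(ℝ) with 0 ≤ u_ε ≤ 1 and w_ε = γ_ε * u_ε, where γ satisfies the standing kernel assumptions, and suppose TV(w_ε(t,·)) ≤ TV(u_0). Then |∫_ℝ u_ε(t,x) ∂_x w_ε(t,x) dx| ≤ TV(w_ε(t,·)) ≤ TV(u_0), and consequently ∫_{-∞}^0 ρ_ε(t,s) γ'_ε(ds) ≤ 2 TV(u_0) where ρ_ε(t,s) = ∫ (u_ε(t,x-s) - u_ε(t,x))² dx. -/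
open MeasureTheory Filter Set Topology
open ENNReal

section Helpers
open MeasureTheory Set Filter ENNReal Topology

lemma tsumZ (w : ℝ → ℝ) (h y : ℝ) (hh : 0 ≤ h) :
    ∑' k : ℤ, edist (w (y + (k+1)*h)) (w (y + k*h)) ≤ eVariationOn w univ := by
  rw [ENNReal.tsum_eq_iSup_sum]
  refine iSup_le fun F => ?_
  obtain ⟨N, hN⟩ : ∃ N : ℕ, ∀ k ∈ F, k.natAbs ≤ N :=
    ⟨F.sup Int.natAbs, fun k hk => Finset.le_sup hk⟩
  set u : ℕ → ℝ := fun i => y + ((i : ℤ) - (N : ℤ)) * h with hu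
  have hmono : Monotone u := by
    intro a b hab
    simp only [hu]
    have : ((a:ℤ) - N : ℤ) ≤ ((b:ℤ) - N : ℤ) := by omega
    have := mul_le_mul_of_nonneg_right (show ((a:ℤ) - N : ℝ) ≤ ((b:ℤ) - N : ℝ) by exact_mod_cast this) hh
    linarith
  set e : ℤ → ℕ := fun k => (k + N).toNat with he
  have hinj : ∀ x ∈ F, ∀ z ∈ F, e x = e z → x = z := by
    intro x hx z hz hxz
    have hx' := hN x hx; have hz' := hN z hz
    simp only [he] at hxz
    omega
  have hcoe : ∀ k ∈ F, ((e k : ℤ)) = k + N := by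
    intro k hk; have := hN k hk; simp only [he]; omega
  calc ∑ k ∈ F, edist (w (y + (k+1)*h)) (w (y + k*h))
      = ∑ j ∈ F.image e, edist (w (u (j+1))) (w (u j)) := by
        rw [Finset.sum_image hinj]
        refine Finset.sum_congr rfl fun k hk => ?_
        have h1 : u (e k) = y + k * h := by
          simp only [hu]; rw [hcoe k hk]; push_cast; ring_nf
        have h2 : u (e k + 1) = y + (k+1) * h := by
          simp only [hu]; push_cast [hcoe k hk]; ring_nf
        rw [h1, h2]
    _ ≤ ∑ j ∈ Finset.range (2*N+1), edist (w (u (j+1))) (w (u j)) := by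
        refine Finset.sum_le_sum_of_subset ?_
        intro j hj
        simp only [Finset.mem_image] at hj
        obtain ⟨k, hk, rfl⟩ := hj
        have := hN k hk
        simp only [Finset.mem_range, he]
        omega
    _ ≤ eVariationOn w univ := eVariationOn.sum_le (f := w) hmono (fun _ => mem_univ _)

lemma lemA (w : ℝ → ℝ) (hw : Continuous w) (h : ℝ) (hh : 0 < h) :
    ∫⁻ x : ℝ, edist (w (x + h)) (w x) ≤ ENNReal.ofReal h * eVariationOn w Set.univ := by
  set f : ℝ → ℝ≥0∞ := fun x => edist (w (x + h)) (w x) with hf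
  have hfm : Measurable f := by
    apply Measurable.edist <;> exact (hw.comp (by continuity)).measurable
  have hU : ⋃ n : ℤ, Ico (n • h) ((n + 1) • h) = univ := iUnion_Ico_zsmul hh
  calc ∫⁻ x, f x
      = ∫⁻ x in ⋃ n : ℤ, Ico (n • h) ((n + 1) • h), f x := by
        rw [hU, setLIntegral_univ]
    _ = ∑' n : ℤ, ∫⁻ x in Ico (n • h) ((n + 1) • h), f x :=
        lintegral_iUnion (fun n => measurableSet_Ico) (pairwise_disjoint_Ico_zsmul h) f
    _ = ∑' n : ℤ, ∫⁻ x in Ico 0 h, f (x + n • h) := by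
        refine tsum_congr fun n => ?_
        have hset : ((fun x : ℝ => x + (n : ℤ) • h) ⁻¹' Ico ((n:ℤ) • h) (((n:ℤ) + 1) • h)) = Ico 0 h := by
          ext x
          simp only [mem_preimage, mem_Ico, zsmul_eq_mul]
          push_cast
          constructor <;> rintro ⟨h1, h2⟩ <;> constructor <;> linarith
        rw [← (measurePreserving_add_right volume ((n:ℤ) • h : ℝ)).setLIntegral_comp_preimage_emb
          (measurableEmbedding_addRight _) f (Ico ((n:ℤ) • h) (((n:ℤ)+1) • h)), hset]
    _ = ∫⁻ x in Ico 0 h, ∑' n : ℤ, f (x + n • h) := by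
        rw [lintegral_tsum]
        exact fun n => (hfm.comp (by measurability)).aemeasurable
    _ ≤ ∫⁻ _ in Ico 0 h, eVariationOn w univ := by
        refine lintegral_mono fun x => ?_
        refine le_trans (le_of_eq (tsum_congr fun n => ?_)) (tsumZ w h x hh.le)
        simp only [hf, zsmul_eq_mul]
        congr 2 <;> push_cast <;> ring
    _ = ENNReal.ofReal h * eVariationOn w univ := by
        rw [lintegral_const, Measure.restrict_apply_univ, Real.volume_Ico, mul_comm]
        norm_num

lemma lemB (w Dw : ℝ → ℝ) (hderivw : ∀ x, HasDerivAt w (Dw x) x) :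
    ∫⁻ x : ℝ, ‖Dw x‖₊ ≤ eVariationOn w univ := by
  have hw : Continuous w := by
    rw [continuous_iff_continuousAt]; exact fun x => (hderivw x).continuousAt
  set F : ℕ → ℝ → ℝ≥0∞ := fun n x =>
    ENNReal.ofReal ((n : ℝ) + 1) * edist (w (x + 1/((n:ℝ)+1))) (w x) with hF
  have hFm : ∀ n, Measurable (F n) := by
    intro n
    exact (measurable_const.mul
      ((hw.comp (by continuity)).measurable.edist hw.measurable))
  have hlim : ∀ x : ℝ, Tendsto (fun n => F n x) atTop (𝓝 (‖Dw x‖₊ : ℝ≥0∞)) := by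
    intro x
    have hslope := hasDerivAt_iff_tendsto_slope.1 (hderivw x)
    have hy : Tendsto (fun n : ℕ => x + 1/((n:ℝ)+1)) atTop (𝓝[≠] x) := by
      refine tendsto_nhdsWithin_of_tendsto_nhds_of_eventually_within _ ?_ ?_
      · have : Tendsto (fun n : ℕ => 1/((n:ℝ)+1)) atTop (𝓝 0) :=
          tendsto_one_div_add_atTop_nhds_zero_nat
        simpa using tendsto_const_nhds.add this
      · filter_upwards [] with n
        have : (0:ℝ) < 1/((n:ℝ)+1) := by positivity
        simp only [mem_compl_iff, mem_singleton_iff]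
        intro hcon
        nlinarith [hcon]
    have h1 : Tendsto (fun n : ℕ => slope w x (x + 1/((n:ℝ)+1))) atTop (𝓝 (Dw x)) :=
      hslope.comp hy
    have h2 : ∀ n : ℕ, F n x = ENNReal.ofReal |slope w x (x + 1/((n:ℝ)+1))| := by
      intro n
      have hne : ((n:ℝ)+1) ≠ 0 := by positivity
      rw [slope_def_field, hF]
      simp only [edist_dist, Real.dist_eq]
      rw [← ENNReal.ofReal_mul (by positivity)]
      congr 1
      have hx : x + 1/((n:ℝ)+1) - x = ((n:ℝ)+1)⁻¹ := by ring
      rw [hx, abs_div, abs_inv, abs_of_pos (show (0:ℝ) < (n:ℝ)+1 by positivity)]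
      field_simp
    simp_rw [h2]
    have : (‖Dw x‖₊ : ℝ≥0∞) = ENNReal.ofReal |Dw x| := by
      rw [← Real.norm_eq_abs, ofReal_norm, enorm_eq_nnnorm]
    rw [this]
    exact (ENNReal.continuous_ofReal.tendsto _).comp (h1.abs)
  calc ∫⁻ x, (‖Dw x‖₊ : ℝ≥0∞)
      = ∫⁻ x, liminf (fun n => F n x) atTop := by
        refine lintegral_congr fun x => ?_
        exact ((hlim x).liminf_eq).symm
    _ ≤ liminf (fun n => ∫⁻ x, F n x) atTop := lintegral_liminf_le hFm
    _ ≤ eVariationOn w univ := by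
        have bound : ∀ n : ℕ, ∫⁻ x, F n x ≤ eVariationOn w univ := by
          intro n
          have hA := lemA w hw (1/((n:ℝ)+1)) (by positivity)
          calc ∫⁻ x, F n x
              = ENNReal.ofReal ((n:ℝ)+1) * ∫⁻ x, edist (w (x + 1/((n:ℝ)+1))) (w x) := by
                rw [hF, lintegral_const_mul]
                exact (hw.comp (by continuity)).measurable.edist hw.measurable
            _ ≤ ENNReal.ofReal ((n:ℝ)+1) *
                (ENNReal.ofReal (1/((n:ℝ)+1)) * eVariationOn w univ) :=
                mul_le_mul_right hA _
            _ = eVariationOn w univ := by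
                rw [← mul_assoc, ← ENNReal.ofReal_mul (by positivity),
                  mul_one_div_cancel (by positivity : ((n:ℝ)+1) ≠ 0), ENNReal.ofReal_one, one_mul]
        refine liminf_le_of_le (by isBoundedDefault) fun b hb => ?_
        obtain ⟨n, hn⟩ := hb.exists
        exact hn.trans (bound n)

end Helpers

/-- Let `u ∈ L²(ℝ)` with `0 ≤ u ≤ 1` and `w = γ_ε * u` for a standing kernel,
with the Volterra derivative `Dw = γ'_ε * u - γ_ε(0) u` (here `μ` is the derivative measure
of `γ_ε`), and suppose `TV(w) ≤ TV(u₀)`. Then `|∫ u ∂ₓw dx| ≤ TV(w) ≤ TV(u₀)`, and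
consequently `∫ ρ(s) γ'_ε(ds) ≤ 2 TV(u₀)` where `ρ(s) = ∫ (u(x-s) - u(x))² dx`. -/
theorem stmt19 (γ u0 : ℝ → ℝ) (ε : ℝ) (hε : 0 < ε) (u : ℝ → ℝ)
    (hγpos : ∀ z, 0 ≤ γ z)
    (hsupp : Function.support γ ⊆ Iic 0)
    (hint : Integrable γ)
    (hmass : ∫ z in Iic (0:ℝ), γ z = 1)
    (hmono : MonotoneOn γ (Iic 0))
    (hconv : ConvexOn ℝ (Iic 0) γ)
    (hBV : eVariationOn γ univ ≠ ⊤)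
    (hu2 : MemLp u 2 (volume : Measure ℝ))
    (hub : ∀ x, u x ∈ Icc (0:ℝ) 1)
    (hu0BV : eVariationOn u0 univ ≠ ⊤)
    (γε : ℝ → ℝ) (hγε : ∀ x, γε x = ε⁻¹ * γ (x / ε))
    (μ : Measure ℝ) [IsFiniteMeasure μ]
    (hμsupp : μ (Ioi 0) = 0)
    (hderiv : ∀ a : ℝ, a ≤ 0 → γε 0 - γε a = (μ (Ioc a 0)).toReal)
    (w Dw : ℝ → ℝ)
    (hw : ∀ x, w x = ∫ y : ℝ, γε (x - y) * u y)
    (hDw : ∀ x, Dw x = (∫ s : ℝ, u (x - s) ∂μ) - γε 0 * u x)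
    (hderivw : ∀ x, HasDerivAt w (Dw x) x)
    (hwBV : eVariationOn w univ ≠ ⊤)
    (hTV : eVariationOn w univ ≤ eVariationOn u0 univ) :
    |∫ x : ℝ, u x * Dw x| ≤ (eVariationOn w univ).toReal ∧
    (eVariationOn w univ).toReal ≤ (eVariationOn u0 univ).toReal ∧
    ∫ s : ℝ, (∫ x : ℝ, (u (x - s) - u x)^2) ∂μ
      ≤ 2 * (eVariationOn u0 univ).toReal := by
  -- basic facts
  have hwc : Continuous w := by
    rw [continuous_iff_continuousAt]; exact fun x => (hderivw x).continuousAt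
  have hDweq : Dw = deriv w := funext fun x => ((hderivw x).deriv).symm
  have hDwm : Measurable Dw := hDweq ▸ measurable_deriv w
  have hlB := lemB w Dw hderivw
  have hDwint : Integrable Dw (volume : Measure ℝ) :=
    ⟨hDwm.aestronglyMeasurable, lt_of_le_of_lt hlB hwBV.lt_top⟩
  have husm : AEStronglyMeasurable u (volume : Measure ℝ) := hu2.aestronglyMeasurable
  have huDw_int : Integrable (fun x => u x * Dw x) (volume : Measure ℝ) := by
    refine hDwint.bdd_mul husm (c := 1) (Filter.Eventually.of_forall fun x => ?_)
    rw [Real.norm_eq_abs, abs_le]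
    exact ⟨by linarith [(hub x).1], (hub x).2⟩
  -- Part 1
  have part1 : |∫ x : ℝ, u x * Dw x| ≤ (eVariationOn w univ).toReal := by
    calc |∫ x : ℝ, u x * Dw x| ≤ ∫ x : ℝ, |u x * Dw x| := by
          simpa only [Real.norm_eq_abs] using norm_integral_le_integral_norm (μ := volume) (fun x => u x * Dw x)
      _ ≤ ∫ x : ℝ, |Dw x| := by
          refine integral_mono huDw_int.abs hDwint.abs fun x => ?_
          rw [abs_mul]
          calc |u x| * |Dw x| ≤ 1 * |Dw x| := by
                have := abs_le.mpr ⟨by linarith [(hub x).1], (hub x).2⟩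
                exact mul_le_mul_of_nonneg_right this (abs_nonneg _)
            _ = |Dw x| := one_mul _
      _ = (∫⁻ x : ℝ, ‖Dw x‖₊).toReal := by
          simp only [← enorm_eq_nnnorm]
          rw [← integral_norm_eq_lintegral_enorm hDwm.aestronglyMeasurable]
          simp [Real.norm_eq_abs]
      _ ≤ (eVariationOn w univ).toReal := ENNReal.toReal_mono hwBV hlB
  have part2 : (eVariationOn w univ).toReal ≤ (eVariationOn u0 univ).toReal :=
    ENNReal.toReal_mono hu0BV hTV
  refine ⟨part1, part2, ?_⟩
  -- Part 3
  have hu2' : Integrable (fun x => u x ^ 2) (volume : Measure ℝ) := hu2.integrable_sq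
  -- translated function
  have husms : ∀ s : ℝ, AEStronglyMeasurable (fun x => u (x - s)) (volume : Measure ℝ) :=
    fun s => husm.comp_quasiMeasurePreserving
      (measurePreserving_sub_right volume s).quasiMeasurePreserving
  have hI1 : ∀ s : ℝ, Integrable (fun x => u (x - s) ^ 2) (volume : Measure ℝ) := by
    intro s
    exact hu2'.comp_sub_right s
  have hI2 : ∀ s : ℝ, Integrable (fun x => u x * u (x - s)) (volume : Measure ℝ) := by
    intro s
    refine Integrable.mono ((hI1 s).add hu2') (husm.mul (husms s)) ?_
    filter_upwards [] with x
    rw [Real.norm_eq_abs, Real.norm_eq_abs, abs_mul]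
    have h1 := hub x; have h2 := hub (x - s)
    rw [abs_of_nonneg h1.1, abs_of_nonneg h2.1]
    have : u x * u (x - s) ≤ u (x - s) ^ 2 + u x ^ 2 := by nlinarith [sq_nonneg (u x - u (x-s))]
    calc u x * u (x - s) ≤ u (x - s) ^ 2 + u x ^ 2 := this
      _ ≤ |u (x - s) ^ 2 + u x ^ 2| := le_abs_self _
  -- product measurability and integrability
  set G : ℝ × ℝ → ℝ := fun p => u p.2 * u (p.2 - p.1) with hG
  have hq : Measure.QuasiMeasurePreserving (fun p : ℝ × ℝ => p.2 - p.1)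
      (μ.prod volume) volume := by
    refine ⟨measurable_snd.sub measurable_fst, ?_⟩
    refine Measure.AbsolutelyContinuous.mk fun s hs h0 => ?_
    rw [Measure.map_apply (f := fun p : ℝ × ℝ => p.2 - p.1) (measurable_snd.sub measurable_fst) hs, Measure.prod_apply (s := (fun p : ℝ × ℝ => p.2 - p.1) ⁻¹' s)
      ((measurable_snd.sub measurable_fst) hs)]
    have : ∀ a : ℝ, (volume : Measure ℝ) (Prod.mk a ⁻¹' ((fun p : ℝ × ℝ => p.2 - p.1) ⁻¹' s)) = 0 := by
      intro a
      have : (Prod.mk a ⁻¹' ((fun p : ℝ × ℝ => p.2 - p.1) ⁻¹' s)) = (fun x => x - a) ⁻¹' s := rfl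
      rw [this, (measurePreserving_sub_right volume a).measure_preimage hs.nullMeasurableSet, h0]
    simp [this]
  have hqsnd : Measure.QuasiMeasurePreserving (fun p : ℝ × ℝ => p.2)
      (μ.prod volume) volume := by
    refine ⟨measurable_snd, ?_⟩
    rw [Measure.map_snd_prod]
    exact Measure.AbsolutelyContinuous.mk fun s hs h0 => by simp [h0]
  have hGsm : AEStronglyMeasurable G (μ.prod volume) :=
    (husm.comp_quasiMeasurePreserving hqsnd).mul (husm.comp_quasiMeasurePreserving hq)
  have hGint : Integrable G (μ.prod volume) := by
    refine ⟨hGsm, ?_⟩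
    have hA : AEMeasurable (fun p : ℝ × ℝ => (‖u p.2‖₊ : ℝ≥0∞)^2) (μ.prod volume) :=
      (husm.comp_quasiMeasurePreserving hqsnd).enorm.pow_const 2
    have hB : AEMeasurable (fun p : ℝ × ℝ => (‖u (p.2 - p.1)‖₊ : ℝ≥0∞)^2) (μ.prod volume) :=
      (husm.comp_quasiMeasurePreserving hq).enorm.pow_const 2
    have hI : ∫⁻ x : ℝ, (‖u x‖₊ : ℝ≥0∞)^2 < ⊤ := by
      have h2 : ∫⁻ x : ℝ, (‖u x ^ 2‖₊ : ℝ≥0∞) < ⊤ := hu2'.2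
      refine lt_of_le_of_lt (le_of_eq ?_) h2
      refine lintegral_congr fun x => ?_
      rw [← ENNReal.coe_pow, ← nnnorm_pow]
    have hbound : ∀ p : ℝ × ℝ, (‖G p‖₊ : ℝ≥0∞)
        ≤ (‖u p.2‖₊ : ℝ≥0∞)^2 + (‖u (p.2 - p.1)‖₊ : ℝ≥0∞)^2 := by
      intro p
      rw [hG]
      simp only [nnnorm_mul, ENNReal.coe_mul]
      set a := (‖u p.2‖₊ : ℝ≥0∞); set b := (‖u (p.2 - p.1)‖₊ : ℝ≥0∞)
      rcases le_total a b with hab | hab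
      · calc a * b ≤ b * b := mul_le_mul_left hab b
          _ = b^2 := (sq b).symm
          _ ≤ a^2 + b^2 := le_add_self
      · calc a * b ≤ a * a := mul_le_mul_right hab a
          _ = a^2 := (sq a).symm
          _ ≤ a^2 + b^2 := le_self_add
    calc ∫⁻ p, (‖G p‖₊ : ℝ≥0∞) ∂(μ.prod volume)
        ≤ ∫⁻ p, ((‖u p.2‖₊ : ℝ≥0∞)^2 + (‖u (p.2 - p.1)‖₊ : ℝ≥0∞)^2) ∂(μ.prod volume) :=
          lintegral_mono hbound
      _ = (∫⁻ p, (‖u p.2‖₊ : ℝ≥0∞)^2 ∂(μ.prod volume))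
          + ∫⁻ p, (‖u (p.2 - p.1)‖₊ : ℝ≥0∞)^2 ∂(μ.prod volume) :=
          lintegral_add_left' hA _
      _ = (∫⁻ s, (∫⁻ x, (‖u x‖₊ : ℝ≥0∞)^2) ∂μ) + ∫⁻ s, (∫⁻ x, (‖u (x - s)‖₊ : ℝ≥0∞)^2) ∂μ := by
          rw [lintegral_prod _ hA, lintegral_prod _ hB]
      _ = μ univ * (∫⁻ x, (‖u x‖₊ : ℝ≥0∞)^2) + μ univ * (∫⁻ x, (‖u x‖₊ : ℝ≥0∞)^2) := by
          have ht : ∀ s : ℝ, (∫⁻ x : ℝ, (‖u (x - s)‖₊ : ℝ≥0∞)^2) = ∫⁻ x : ℝ, (‖u x‖₊ : ℝ≥0∞)^2 :=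
            fun s => lintegral_sub_right_eq_self (fun x => (‖u x‖₊ : ℝ≥0∞)^2) s
          rw [lintegral_congr ht, lintegral_const]
          ring
      _ < ⊤ := by
          have hμt := measure_ne_top μ univ
          exact ENNReal.add_lt_top.mpr ⟨ENNReal.mul_lt_top hμt.lt_top hI,
            ENNReal.mul_lt_top hμt.lt_top hI⟩
  -- Fubini
  have hfub : ∫ s : ℝ, (∫ x : ℝ, u x * u (x - s)) ∂μ = ∫ x : ℝ, (∫ s : ℝ, u x * u (x - s) ∂μ) :=
    integral_integral_swap (f := fun s x => u x * u (x - s)) hGint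
  have hιh : Integrable (fun s => ∫ x : ℝ, u x * u (x - s)) μ := by
    have := hGint.integral_prod_left
    simpa [hG] using this
  -- per-s identity
  have hρ : ∀ s : ℝ, (∫ x : ℝ, (u (x - s) - u x)^2)
      = 2 * (∫ x : ℝ, u x ^ 2) - 2 * (∫ x : ℝ, u x * u (x - s)) := by
    intro s
    have e1 : (fun x : ℝ => (u (x - s) - u x)^2)
        = fun x => (u (x - s)^2 + u x ^2) - 2 * (u x * u (x - s)) := by
      funext x; ring
    have hadd : Integrable (fun x : ℝ => u (x - s) ^ 2 + u x ^ 2) (volume : Measure ℝ) :=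
      (hI1 s).add hu2'
    rw [e1, integral_sub hadd ((hI2 s).const_mul 2),
      integral_add (hI1 s) hu2', integral_const_mul]
    have e2 : ∫ x : ℝ, u (x - s) ^ 2 = ∫ x : ℝ, u x ^ 2 :=
      integral_sub_right_eq_self (fun x => u x ^ 2) s
    rw [e2]; ring
  -- total mass of μ
  have hμuniv : (μ univ).toReal = γε 0 := by
    have hsplit : μ univ = μ (Iic 0) := by
      refine le_antisymm ?_ (measure_mono (subset_univ _))
      rw [← Iic_union_Ioi (a := (0:ℝ))]
      exact le_trans (measure_union_le _ _) (by rw [hμsupp, add_zero])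
    have hsets : Monotone (fun n : ℕ => Ioc (-(n:ℝ)) 0) := fun m n hmn =>
      Ioc_subset_Ioc (neg_le_neg (by exact_mod_cast hmn)) le_rfl
    have hU : ⋃ n : ℕ, Ioc (-(n:ℝ)) 0 = Iic 0 := by
      ext x
      simp only [mem_iUnion, mem_Ioc, mem_Iic]
      constructor
      · rintro ⟨n, _, h2⟩; exact h2
      · intro hx
        obtain ⟨n, hn⟩ := exists_nat_gt (-x)
        exact ⟨n, by linarith, hx⟩
    have hmeas : Tendsto (fun n : ℕ => μ (Ioc (-(n:ℝ)) 0)) atTop (𝓝 (μ (Iic 0))) := by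
      have := tendsto_measure_iUnion_atTop (μ := μ) hsets
      rwa [hU] at this
    have hmeasR : Tendsto (fun n : ℕ => (μ (Ioc (-(n:ℝ)) 0)).toReal) atTop
        (𝓝 ((μ (Iic 0)).toReal)) :=
      (ENNReal.tendsto_toReal (measure_ne_top μ _)).comp hmeas
    have hγ0 : Tendsto γ atBot (𝓝 0) := by
      rw [Metric.tendsto_nhds]
      intro δ hδ
      have hex : ∃ b ≤ (0:ℝ), γ b < δ := by
        by_contra hc
        push_neg at hc
        have hfin : ∫⁻ x in Iic (0:ℝ), (‖γ x‖₊ : ℝ≥0∞) < ⊤ := hint.integrableOn.2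
        have hbig : ∫⁻ x in Iic (0:ℝ), ENNReal.ofReal δ ≤ ∫⁻ x in Iic (0:ℝ), (‖γ x‖₊ : ℝ≥0∞) := by
          refine lintegral_mono_ae ((ae_restrict_iff' measurableSet_Iic).mpr
            (Filter.Eventually.of_forall fun x hx => ?_))
          rw [← enorm_eq_nnnorm, ← ofReal_norm, Real.norm_eq_abs, abs_of_nonneg (hγpos x)]
          exact ENNReal.ofReal_le_ofReal (hc x hx)
        rw [setLIntegral_const, Real.volume_Iic, ENNReal.mul_top
          (by simpa using ENNReal.ofReal_pos.mpr hδ |>.ne')] at hbig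
        exact (lt_irrefl ⊤ (lt_of_le_of_lt hbig hfin)).elim
      obtain ⟨b, hb0, hbδ⟩ := hex
      filter_upwards [eventually_le_atBot b] with a ha
      have hle : γ a ≤ γ b := hmono (le_trans ha hb0) hb0 ha
      rw [Real.dist_eq, sub_zero, abs_of_nonneg (hγpos a)]
      exact lt_of_le_of_lt hle hbδ
    have hγε0 : Tendsto (fun n : ℕ => γε (-(n:ℝ))) atTop (𝓝 0) := by
      have harg : Tendsto (fun n : ℕ => -((n:ℝ)/ε)) atTop atBot :=
        tendsto_neg_atTop_atBot.comp (tendsto_natCast_atTop_atTop.atTop_div_const hε)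
      have hcomp := hγ0.comp harg
      have : Tendsto (fun n : ℕ => ε⁻¹ * γ (-((n:ℝ)/ε))) atTop (𝓝 (ε⁻¹ * 0)) :=
        tendsto_const_nhds.mul hcomp
      simp only [mul_zero] at this
      refine this.congr fun n => ?_
      rw [hγε]
      congr 2
      ring
    have hcomb : Tendsto (fun n : ℕ => γε 0 - γε (-(n:ℝ))) atTop (𝓝 (γε 0)) := by
      simpa using tendsto_const_nhds.sub hγε0
    have hcomb2 : Tendsto (fun n : ℕ => (μ (Ioc (-(n:ℝ)) 0)).toReal) atTop (𝓝 (γε 0)) := by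
      refine hcomb.congr fun n => ?_
      exact hderiv _ (neg_nonpos.mpr (Nat.cast_nonneg n))
    rw [hsplit]
    exact tendsto_nhds_unique hmeasR hcomb2
  -- the key identity ∫ u Dw = -(1/2) ∫ ρ dμ
  have hg : ∀ x : ℝ, (∫ s : ℝ, u x * u (x - s) ∂μ) = u x * ∫ s : ℝ, u (x - s) ∂μ :=
    fun x => integral_const_mul (u x) _
  have hkey : ∫ x : ℝ, u x * Dw x
      = ∫ s : ℝ, (∫ x : ℝ, u x * u (x - s)) ∂μ - γε 0 * ∫ x : ℝ, u x ^ 2 := by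
    have e1 : (fun x : ℝ => u x * Dw x)
        = fun x => (∫ s : ℝ, u x * u (x - s) ∂μ) - γε 0 * u x ^ 2 := by
      funext x
      rw [hg x, hDw x]
      ring
    have hgint : Integrable (fun x : ℝ => ∫ s : ℝ, u x * u (x - s) ∂μ) (volume : Measure ℝ) := by
      have e2 : (fun x : ℝ => ∫ s : ℝ, u x * u (x - s) ∂μ)
          = fun x => (u x * Dw x) + γε 0 * u x ^ 2 := by
        funext x; rw [hg x, hDw x]; ring
      rw [e2]
      exact huDw_int.add (hu2'.const_mul _)
    rw [e1, integral_sub hgint (hu2'.const_mul _), integral_const_mul, hfub]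
  -- integrability of ρ over μ
  have hρint : Integrable (fun s => ∫ x : ℝ, (u (x - s) - u x)^2) μ := by
    have : (fun s => ∫ x : ℝ, (u (x - s) - u x)^2)
        = fun s => 2 * (∫ x : ℝ, u x ^ 2) - 2 * (∫ x : ℝ, u x * u (x - s)) := funext hρ
    rw [this]
    exact (integrable_const _).sub (hιh.const_mul 2)
  -- conclude
  have hfinal : ∫ s : ℝ, (∫ x : ℝ, (u (x - s) - u x)^2) ∂μ = -2 * ∫ x : ℝ, u x * Dw x := by
    have e1 : ∫ s : ℝ, (∫ x : ℝ, (u (x - s) - u x)^2) ∂μ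
        = ∫ s : ℝ, (2 * (∫ x : ℝ, u x ^ 2) - 2 * (∫ x : ℝ, u x * u (x - s))) ∂μ := by
      exact integral_congr_ae (Filter.Eventually.of_forall fun s => hρ s)
    rw [e1, integral_sub (integrable_const _) (hιh.const_mul 2), integral_const,
      integral_const_mul, hkey, measureReal_def, hμuniv]
    simp only [smul_eq_mul]
    ring
  rw [hfinal]
  have : -2 * ∫ x : ℝ, u x * Dw x ≤ 2 * |∫ x : ℝ, u x * Dw x| := by
    rw [neg_mul]
    have := neg_abs_le (∫ x : ℝ, u x * Dw x)
    nlinarith [abs_nonneg (∫ x : ℝ, u x * Dw x)]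
  calc -2 * ∫ x : ℝ, u x * Dw x ≤ 2 * |∫ x : ℝ, u x * Dw x| := this
    _ ≤ 2 * (eVariationOn w univ).toReal := by linarith [part1]
    _ ≤ 2 * (eVariationOn u0 univ).toReal := by linarith [part2]
end
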